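/- arXiv:2006.12207 — 2 statements merged into one kernel-verified Lean document; each statement's English description precedes it below -/
import Mathlib

section
/- Let A be a finite alphabet, φ: A* → A* a marked morphism in Class P_ret, and u ∈ A^ℕ an infinite word whose language L(u) is closed under reversal. If the infinite word φ(u) is rich, then u is rich. -/
open List

/-- Apply a morphism (given by its values on letters) to a finite word. -/
def applyM {A : Type*} (φ : A → List A) (v : List A) : List A := v.flatMap φ

/-- The set of occurrences of `w` as a factor of `u`:
indices `i` such that the block of `u` of length `|w|` starting at `i` equals `w`. -/
def occs {A : Type*} [DecidableEq A] (w u : List A) : Finset ℕ :=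
  (Finset.range (u.length + 1)).filter
    (fun i => i + w.length ≤ u.length ∧ (u.drop i).take w.length = w)

/-- A morphism `φ` belongs to Class `P_ret` with marker `w` if it is injective on
letters, `w` is a palindrome, and for each letter `a` the word `φ(a)w` is a palindrome
in which `w` occurs exactly twice, namely as a prefix (position `0`) and as a suffix
(position `|φ(a)|`, distinct from `0`). -/
def IsPretWithMarker {A : Type*} [DecidableEq A] (φ : A → List A) (w : List A) : Prop :=
  Function.Injective φ ∧ w.reverse = w ∧
    ∀ a : A, (φ a ++ w).reverse = φ a ++ w ∧
      occs w (φ a ++ w) = {0, (φ a).length} ∧ (φ a).length ≠ 0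

/-- The block of length `len` of the infinite word `u` starting at position `i`. -/
def factorAt {A : Type*} (u : ℕ → A) (i len : ℕ) : List A :=
  (List.range len).map fun k => u (i + k)

/-- `i` is an occurrence of the finite word `v` in the infinite word `u`. -/
def OccursAt {A : Type*} (u : ℕ → A) (v : List A) (i : ℕ) : Prop :=
  factorAt u i v.length = v

/-- `v` belongs to the language of the infinite word `u`, i.e. `v` is a factor of `u`. -/
def InLang {A : Type*} (u : ℕ → A) (v : List A) : Prop := ∃ i, OccursAt u v i

/-- The image `φ(u) = φ(u₀)φ(u₁)φ(u₂)⋯` of an infinite word `u` under a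
(non-erasing) morphism `φ`, as an infinite word. -/
def applyInf {A : Type*} (φ : A → List A) (u : ℕ → A) (n : ℕ) : A :=
  (((List.range (n + 1)).flatMap fun i => φ (u i))).getD n (u 0)

/-- The language of `u` is closed under reversal. -/
def ClosedUnderReversal {A : Type*} (u : ℕ → A) : Prop :=
  ∀ v : List A, InLang u v → InLang u v.reverse

/-- A finite word is rich if its number of palindromic factors (including `ε`)
equals its length plus one. -/
def RichWord {A : Type*} (u : List A) : Prop :=
  {p : List A | p <:+: u ∧ p.reverse = p}.ncard = u.length + 1

/-- An infinite word is rich if all its finite prefixes are rich. -/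
def RichInf {A : Type*} (u : ℕ → A) : Prop := ∀ n : ℕ, RichWord (factorAt u 0 n)

/-- An infinite word is recurrent if each of its factors occurs infinitely often. -/
def Recurrent {A : Type*} (u : ℕ → A) : Prop :=
  ∀ v : List A, InLang u v → ∀ N : ℕ, ∃ i, N ≤ i ∧ OccursAt u v i

/-- `r` is a return word to `w` in the infinite word `u`: `wr ∈ L(u)` and `w`
occurs in `wr` exactly twice, as a prefix and as a suffix. -/
def IsReturnWord {A : Type*} [DecidableEq A] (u : ℕ → A) (w r : List A) : Prop :=
  r ≠ [] ∧ InLang u (w ++ r) ∧ occs w (w ++ r) = {0, r.length}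

/-- Left extensions of `x` in the language of `u`. -/
def leftExt {A : Type*} (u : ℕ → A) (x : List A) : Set A := {a | InLang u (a :: x)}

/-- Right extensions of `x` in the language of `u`. -/
def rightExt {A : Type*} (u : ℕ → A) (x : List A) : Set A := {b | InLang u (x ++ [b])}

/-- Bi-extensions of `x` in the language of `u`. -/
def biExt {A : Type*} (u : ℕ → A) (x : List A) : Set (A × A) :=
  {p | InLang u (p.1 :: (x ++ [p.2]))}

/-- `x` is bispecial in `u`. -/
def Bispecial {A : Type*} (u : ℕ → A) (x : List A) : Prop :=
  2 ≤ (leftExt u x).ncard ∧ 2 ≤ (rightExt u x).ncard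

/-- The bilateral order `b_u(x) = #B_u(x) − #L_u(x) − #R_u(x) + 1`. -/
noncomputable def bilateralOrder {A : Type*} (u : ℕ → A) (x : List A) : ℤ :=
  ((biExt u x).ncard : ℤ) - (leftExt u x).ncard - (rightExt u x).ncard + 1

/-- The number of palindromic extensions of `x` in `u`. -/
noncomputable def pext {A : Type*} (u : ℕ → A) (x : List A) : ℕ :=
  {a | InLang u (a :: (x ++ [a]))}.ncard

/-- Arnoux-Rauzy morphisms: the monoid of morphisms generated by permutations of the
alphabet and by the elementary morphisms `ψ_a : a ↦ a, b ↦ ab` and `ψ̄_a : a ↦ a, b ↦ ba`. -/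
inductive IsAR {A : Type*} [DecidableEq A] : (A → List A) → Prop
  | perm (π : Equiv.Perm A) : IsAR (fun a => [π a])
  | psiL (a : A) : IsAR (fun b => if b = a then [a] else [a, b])
  | psiR (a : A) : IsAR (fun b => if b = a then [a] else [b, a])
  | comp {φ ψ : A → List A} : IsAR φ → IsAR ψ → IsAR (fun a => applyM φ (ψ a))

/-- The `k`-th power `φ^k` of a morphism. -/
def powM {A : Type*} (φ : A → List A) : ℕ → A → List A
  | 0, a => [a]
  | n + 1, a => applyM (powM φ n) (φ a)

/-- A morphism is primitive if some power of it maps every letter to a word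
containing every letter. -/
def PrimitiveM {A : Type*} (φ : A → List A) : Prop :=
  ∃ k : ℕ, ∀ a b : A, b ∈ powM φ k a

/-- A (acyclic) morphism is marked: it has a rightmost conjugate `φR` whose
last-letter map is injective, and a leftmost conjugate `φL` whose first-letter map
is injective. -/
def Marked {A : Type*} (φ : A → List A) : Prop :=
  ∃ (φR φL : A → List A) (x y : List A),
    (∀ a, φ a ++ x = x ++ φR a) ∧
    (∀ a, φL a ++ y = y ++ φ a) ∧
    (∃ a b : A, (φR a).getLast? ≠ (φR b).getLast?) ∧
    (∃ a b : A, (φL a).head? ≠ (φL b).head?) ∧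
    Function.Injective (fun c => (φR c).getLast?) ∧
    Function.Injective (fun c => (φL c).head?)


section PretRichAux

open List

variable {A : Type*} [DecidableEq A] {φ : A → List A} {w : List A}

lemma applyM_nil' (φ : A → List A) : applyM φ ([] : List A) = [] := rfl

lemma applyM_cons' (φ : A → List A) (c : A) (t : List A) :
    applyM φ (c :: t) = φ c ++ applyM φ t := by simp [applyM]

lemma applyM_append' (φ : A → List A) (s t : List A) :
    applyM φ (s ++ t) = applyM φ s ++ applyM φ t := by simp [applyM]

lemma phi_len_ne (h : IsPretWithMarker φ w) (a : A) : (φ a).length ≠ 0 :=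
  (h.2.2 a).2.2

lemma mem_occs_iff {u : List A} {i : ℕ} :
    i ∈ occs w u ↔ i + w.length ≤ u.length ∧ (u.drop i).take w.length = w := by
  simp only [occs, Finset.mem_filter, Finset.mem_range]
  constructor
  · rintro ⟨-, h2⟩; exact h2
  · rintro ⟨h1, h2⟩; exact ⟨by omega, h1, h2⟩

lemma length_le_applyM (h : IsPretWithMarker φ w) (t : List A) :
    t.length ≤ (applyM φ t).length := by
  induction t with
  | nil => simp [applyM]
  | cons c t ih =>
    have := phi_len_ne h c
    rw [applyM_cons', length_append, length_cons]
    omega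

lemma w_prefix_letter (h : IsPretWithMarker φ w) (a : A) : w <+: φ a ++ w := by
  have h0 : (0 : ℕ) ∈ occs w (φ a ++ w) := by
    rw [(h.2.2 a).2.1]; simp
  rw [mem_occs_iff] at h0
  exact prefix_iff_eq_take.mpr (by simpa using h0.2.symm)

lemma w_prefix_applyM (h : IsPretWithMarker φ w) (t : List A) :
    w <+: applyM φ t ++ w := by
  induction t with
  | nil => simp [applyM]
  | cons c t ih =>
    obtain ⟨r, hr⟩ := ih
    have h1 := w_prefix_letter h c
    have e : applyM φ (c :: t) ++ w = (φ c ++ w) ++ r := by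
      rw [applyM_cons', append_assoc, ← hr, ← append_assoc]
    rw [e]
    exact h1.trans (prefix_append _ _)

lemma w_swap (h : IsPretWithMarker φ w) (c : A) : w ++ (φ c).reverse = φ c ++ w := by
  have e := (h.2.2 c).1
  rw [reverse_append, h.2.1] at e
  exact e

lemma reverse_applyM (h : IsPretWithMarker φ w) (t : List A) :
    (applyM φ t ++ w).reverse = applyM φ t.reverse ++ w := by
  induction t with
  | nil => simpa [applyM] using h.2.1
  | cons c t ih =>
    calc (applyM φ (c :: t) ++ w).reverse
        = (φ c ++ (applyM φ t ++ w)).reverse := by rw [applyM_cons', append_assoc]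
      _ = (applyM φ t ++ w).reverse ++ (φ c).reverse := by rw [reverse_append]
      _ = applyM φ t.reverse ++ (w ++ (φ c).reverse) := by rw [ih, append_assoc]
      _ = applyM φ t.reverse ++ (φ c ++ w) := by rw [w_swap h c]
      _ = applyM φ (t.reverse ++ [c]) ++ w := by
            rw [applyM_append']; simp [applyM, append_assoc]
      _ = applyM φ (c :: t).reverse ++ w := by rw [reverse_cons]

lemma slice_of_prefix {P Z : List A} (hp : P <+: Z) {i k : ℕ} (hik : i + k ≤ P.length) :
    (Z.drop i).take k = (P.drop i).take k := by
  obtain ⟨r, rfl⟩ := hp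
  rw [drop_append, take_append_of_le_length (by rw [length_drop]; omega)]

lemma head_eq (h : IsPretWithMarker φ w) {c c' : A} {t t' : List A}
    (hlen : (φ c).length ≤ (φ c').length)
    (heq : φ c ++ (applyM φ t ++ w) = φ c' ++ (applyM φ t' ++ w)) : c = c' := by
  have hZ : φ c' ++ w <+: φ c' ++ (applyM φ t' ++ w) := by
    obtain ⟨r, hr⟩ := w_prefix_applyM h t'
    exact ⟨r, by rw [append_assoc, hr]⟩
  have hmem : (φ c).length ∈ occs w (φ c' ++ w) := by
    rw [mem_occs_iff]
    refine ⟨by rw [length_append]; omega, ?_⟩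
    have h1 : ((φ c' ++ (applyM φ t' ++ w)).drop (φ c).length).take w.length = w := by
      rw [← heq, drop_left]
      exact (prefix_iff_eq_take.mp (w_prefix_applyM h t)).symm
    rw [← slice_of_prefix hZ (by rw [length_append]; omega)]
    exact h1
  rw [(h.2.2 c').2.1] at hmem
  simp only [Finset.mem_insert, Finset.mem_singleton] at hmem
  rcases hmem with h0 | hlen'
  · exact absurd h0 (phi_len_ne h c)
  · have p1 : φ c <+: φ c ++ (applyM φ t ++ w) := prefix_append _ _
    have p2 : φ c' <+: φ c ++ (applyM φ t ++ w) := by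
      rw [heq]; exact prefix_append _ _
    exact h.1 ((prefix_of_prefix_length_le p1 p2 hlen).eq_of_length hlen')

lemma applyM_inj (h : IsPretWithMarker φ w) (t : List A) :
    ∀ t' : List A, applyM φ t = applyM φ t' → t = t' := by
  induction t with
  | nil =>
    intro t' heq
    cases t' with
    | nil => rfl
    | cons c' t'' =>
      exfalso
      have e : (applyM φ (c' :: t'')).length = 0 := by rw [← heq]; simp [applyM]
      rw [applyM_cons', length_append] at e
      exact phi_len_ne h c' (by omega)
  | cons c t ih =>
    intro t' heq
    cases t' with
    | nil =>
      exfalso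
      have e : (applyM φ (c :: t)).length = 0 := by rw [heq]; simp [applyM]
      rw [applyM_cons', length_append] at e
      exact phi_len_ne h c (by omega)
    | cons c' t'' =>
      have heqw : φ c ++ (applyM φ t ++ w) = φ c' ++ (applyM φ t'' ++ w) := by
        have h2 := congrArg (fun z => z ++ w) heq
        simp only [applyM_cons'] at h2
        simpa [append_assoc] using h2
      have hcc : c = c' := by
        rcases le_total (φ c).length (φ c').length with hl | hl
        · exact head_eq h hl heqw
        · exact (head_eq h hl heqw.symm).symm
      subst hcc
      rw [applyM_cons', applyM_cons'] at heq
      rw [ih t'' (append_cancel_left heq)]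

lemma occ_is_partial (h : IsPretWithMarker φ w) (t : List A) :
    ∀ i : ℕ, i + w.length ≤ (applyM φ t).length + w.length →
      ((applyM φ t ++ w).drop i).take w.length = w →
      ∃ t₁ t₂ : List A, t = t₁ ++ t₂ ∧ i = (applyM φ t₁).length := by
  induction t with
  | nil =>
    intro i h1 _
    have hi0 : i = 0 := by simp [applyM] at h1; omega
    exact ⟨[], [], rfl, by simp [applyM, hi0]⟩
  | cons c t ih =>
    intro i h1 h2
    rcases le_or_gt (φ c).length i with hl | hl
    · have e1 : applyM φ (c :: t) ++ w = φ c ++ (applyM φ t ++ w) := by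
        rw [applyM_cons', append_assoc]
      have h2' : ((applyM φ t ++ w).drop (i - (φ c).length)).take w.length = w := by
        rw [e1, drop_append, drop_eq_nil_of_le hl] at h2
        simpa using h2
      have h1' : (i - (φ c).length) + w.length ≤ (applyM φ t).length + w.length := by
        rw [applyM_cons', length_append] at h1; omega
      obtain ⟨t₁, t₂, rfl, hi⟩ := ih _ h1' h2'
      exact ⟨c :: t₁, t₂, rfl, by rw [applyM_cons', length_append]; omega⟩
    · have hpre : φ c ++ w <+: applyM φ (c :: t) ++ w := by
        obtain ⟨r, hr⟩ := w_prefix_applyM h t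
        exact ⟨r, by rw [append_assoc, hr, applyM_cons', append_assoc]⟩
      have hmem : i ∈ occs w (φ c ++ w) := by
        rw [mem_occs_iff]
        refine ⟨by rw [length_append]; omega, ?_⟩
        rw [← slice_of_prefix hpre (by rw [length_append]; omega)]
        exact h2
      rw [(h.2.2 c).2.1] at hmem
      simp only [Finset.mem_insert, Finset.mem_singleton] at hmem
      rcases hmem with h0 | h0
      · exact ⟨[], c :: t, rfl, by simp [applyM, h0]⟩
      · omega

lemma palSetFin (v : List A) : {p : List A | p <:+: v ∧ p.reverse = p}.Finite :=
  Set.Finite.subset v.sublists.finite_toSet fun p hp => List.mem_sublists.mpr hp.1.sublist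

lemma exists_mps (v : List A) (hv : v ≠ []) :
    ∃ S : List A, S <:+ v ∧ S.reverse = S ∧ S ≠ [] ∧
      ∀ p : List A, p <:+ v → p.reverse = p → p.length ≤ S.length := by
  classical
  have hmem0 : [v.getLast hv] ∈ v.tails.toFinset.filter (fun p => p.reverse = p) := by
    rw [Finset.mem_filter, List.mem_toFinset, List.mem_tails]
    exact ⟨⟨v.dropLast, dropLast_append_getLast hv⟩, by simp⟩
  obtain ⟨S, hSF, hSmax⟩ :=
    (v.tails.toFinset.filter (fun p => p.reverse = p)).exists_max_image List.length ⟨_, hmem0⟩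
  rw [Finset.mem_filter, List.mem_toFinset, List.mem_tails] at hSF
  have hmax : ∀ p : List A, p <:+ v → p.reverse = p → p.length ≤ S.length := by
    intro p hp hpal
    exact hSmax p (by rw [Finset.mem_filter, List.mem_toFinset, List.mem_tails]; exact ⟨hp, hpal⟩)
  have hS1 : 1 ≤ S.length := by simpa using hSmax _ hmem0
  exact ⟨S, hSF.1, hSF.2, by intro h0; rw [h0] at hS1; simp at hS1, hmax⟩

lemma infix_concat' {p v : List A} {a : A} (hp : p <:+: v ++ [a]) :
    p <:+: v ∨ p <:+ v ++ [a] := by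
  obtain ⟨x, y, hxy⟩ := hp
  rcases eq_nil_or_concat y with rfl | ⟨y', a', rfl⟩
  · right; exact ⟨x, by simpa using hxy⟩
  · left
    have hxy' : (x ++ p ++ y') ++ [a'] = v ++ [a] := by
      rw [← hxy, concat_eq_append]
      simp [append_assoc]
    exact ⟨x, y', (List.append_inj' hxy' rfl).1⟩

lemma palSet_concat {v S : List A} {a : A}
    (hS : S <:+ v ++ [a]) (hSpal : S.reverse = S)
    (hmax : ∀ p : List A, p <:+ v ++ [a] → p.reverse = p → p.length ≤ S.length) :
    {p : List A | p <:+: v ++ [a] ∧ p.reverse = p}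
      = insert S {p : List A | p <:+: v ∧ p.reverse = p} := by
  ext p
  simp only [Set.mem_insert_iff, Set.mem_setOf_eq]
  constructor
  · rintro ⟨hinf, hpal⟩
    rcases infix_concat' hinf with hv | hsuf
    · exact Or.inr ⟨hv, hpal⟩
    · rcases suffix_or_suffix_of_suffix hsuf hS with hps | hsp
      · rcases eq_or_lt_of_le (hmax p hsuf hpal) with heq | hlt
        · exact Or.inl (hps.eq_of_length heq)
        · right
          refine ⟨?_, hpal⟩
          have hppre : p <+: S := by
            have hh := reverse_prefix.mpr hps
            rwa [hpal, hSpal] at hh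
          obtain ⟨r, hr⟩ := hppre
          obtain ⟨x, hx⟩ := hS
          rcases eq_nil_or_concat r with rfl | ⟨r', a', rfl⟩
          · rw [append_nil] at hr
            rw [hr] at hlt; omega
          · have hx' : (x ++ p ++ r') ++ [a'] = v ++ [a] := by
              rw [← hx, ← hr, concat_eq_append]
              simp [append_assoc]
            exact ⟨x, r', (List.append_inj' hx' rfl).1⟩
      · left
        have h5 : S.length ≤ p.length := hsp.length_le
        have h6 := hmax p hsuf hpal
        exact (hsp.eq_of_length (le_antisymm h5 h6)).symm
  · rintro (rfl | ⟨hinf, hpal⟩)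
    · exact ⟨hS.isInfix, hSpal⟩
    · exact ⟨hinf.trans (prefix_append v [a]).isInfix, hpal⟩

lemma factorAt_length' (x : ℕ → A) (i len : ℕ) : (factorAt x i len).length = len := by
  simp [factorAt]

lemma factorAt_succ' (x : ℕ → A) (n : ℕ) :
    factorAt x 0 (n + 1) = factorAt x 0 n ++ [x n] := by
  simp [factorAt, List.range_succ]

lemma factorAt_add' (x : ℕ → A) (K L : ℕ) :
    factorAt x 0 (K + L) = factorAt x 0 K ++ factorAt x K L := by
  simp [factorAt, List.range_add, Function.comp]

lemma factorAt_prefix (x : ℕ → A) {K J : ℕ} (hKJ : K ≤ J) :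
    factorAt x 0 K <+: factorAt x 0 J := by
  refine ⟨factorAt x K (J - K), ?_⟩
  rw [← factorAt_add']
  congr 1
  omega

lemma applyM_prefix_mono (φ : A → List A) {s t : List A} (hst : s <+: t) :
    applyM φ s <+: applyM φ t := by
  obtain ⟨r, rfl⟩ := hst
  rw [applyM_append']
  exact prefix_append _ _

lemma applyInf_eq_getElem (h : IsPretWithMarker φ w) (u : ℕ → A) (n : ℕ)
    (hn : n < (applyM φ (factorAt u 0 (n+1))).length) :
    applyInf φ u n = (applyM φ (factorAt u 0 (n+1)))[n] := by
  have e0 : (List.range (n + 1)).flatMap (fun i => φ (u i))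
      = applyM φ (factorAt u 0 (n+1)) := by
    rw [applyM, factorAt, List.flatMap_map]
    congr 1
    funext k
    simp
  show ((List.range (n + 1)).flatMap fun i => φ (u i)).getD n (u 0) = _
  rw [e0, List.getD_eq_getElem _ _ hn]

lemma image_getElem (h : IsPretWithMarker φ w) (u : ℕ → A) {K n : ℕ}
    (hn : n < (applyM φ (factorAt u 0 K)).length) :
    applyInf φ u n = (applyM φ (factorAt u 0 K))[n] := by
  have p1 : applyM φ (factorAt u 0 (n+1)) <+: applyM φ (factorAt u 0 (max (n+1) K)) :=
    applyM_prefix_mono φ (factorAt_prefix u (le_max_left _ _))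
  have p2 : applyM φ (factorAt u 0 K) <+: applyM φ (factorAt u 0 (max (n+1) K)) :=
    applyM_prefix_mono φ (factorAt_prefix u (le_max_right _ _))
  have hn1 : n < (applyM φ (factorAt u 0 (n+1))).length := by
    have h5 := length_le_applyM h (factorAt u 0 (n+1))
    rw [factorAt_length'] at h5; omega
  rw [applyInf_eq_getElem h u n hn1, p1.getElem hn1]
  exact (p2.getElem hn).symm

lemma image_factor' (h : IsPretWithMarker φ w) (u : ℕ → A) {K : ℕ} {P : List A}
    (hP : P <+: applyM φ (factorAt u 0 K)) :
    factorAt (applyInf φ u) 0 P.length = P := by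
  have hlen : P.length ≤ (applyM φ (factorAt u 0 K)).length := hP.length_le
  apply List.ext_getElem
  · simp [factorAt_length']
  · intro n h1 h2
    have e1 : (factorAt (applyInf φ u) 0 P.length)[n] = applyInf φ u n := by
      simp [factorAt]
    rw [e1, image_getElem h u (show n < (applyM φ (factorAt u 0 K)).length by
      rw [factorAt_length'] at h1; omega)]
    exact (hP.getElem h2).symm

lemma Q_prefix (h : IsPretWithMarker φ w) (u : ℕ → A) (n : ℕ) :
    applyM φ (factorAt u 0 (n+1)) ++ w <+: applyM φ (factorAt u 0 ((n+1) + w.length)) := by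
  have e := factorAt_add' u (n+1) w.length
  rw [e, applyM_append']
  have hw : w <+: applyM φ (factorAt u (n+1) w.length) := by
    have hlen : w.length ≤ (applyM φ (factorAt u (n+1) w.length)).length := by
      have h5 := length_le_applyM h (factorAt u (n+1) w.length)
      rwa [factorAt_length'] at h5
    have h6 := prefix_iff_eq_take.mp (w_prefix_applyM h (factorAt u (n+1) w.length))
    rw [take_append_of_le_length hlen] at h6
    exact prefix_iff_eq_take.mpr h6
  obtain ⟨r, hr⟩ := hw
  exact ⟨r, by rw [append_assoc, hr]⟩

lemma rich_step_forward {x : ℕ → A} (hr : RichInf x) (m : ℕ) {S : List A}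
    (hS : S <:+ factorAt x 0 (m+1)) (hSpal : S.reverse = S)
    (hmax : ∀ p : List A, p <:+ factorAt x 0 (m+1) → p.reverse = p → p.length ≤ S.length) :
    S ∉ {p : List A | p <:+: factorAt x 0 m ∧ p.reverse = p} := by
  intro hSmem
  have h1 := hr m
  have h2 := hr (m+1)
  unfold RichWord at h1 h2
  rw [factorAt_length'] at h1 h2
  rw [factorAt_succ'] at hS hmax
  have hc := palSet_concat hS hSpal hmax
  rw [factorAt_succ', hc, Set.insert_eq_self.mpr hSmem, h1] at h2
  omega

lemma rich_of_steps {x : ℕ → A}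
    (h : ∀ m : ℕ, ∀ S : List A, S <:+ factorAt x 0 (m+1) → S.reverse = S →
      (∀ p : List A, p <:+ factorAt x 0 (m+1) → p.reverse = p → p.length ≤ S.length) →
      S ∉ {p : List A | p <:+: factorAt x 0 m ∧ p.reverse = p}) :
    RichInf x := by
  intro n
  induction n with
  | zero =>
    have h0 : factorAt x 0 0 = ([] : List A) := by simp [factorAt]
    unfold RichWord
    rw [h0]
    have hset : {p : List A | p <:+: ([] : List A) ∧ p.reverse = p} = {([] : List A)} := by
      ext p
      simp only [Set.mem_setOf_eq, Set.mem_singleton_iff, List.infix_nil]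
      exact ⟨fun hp => hp.1, fun hp => ⟨hp, by rw [hp]; rfl⟩⟩
    rw [hset, Set.ncard_singleton]
    simp
  | succ m ih =>
    unfold RichWord at ih ⊢
    rw [factorAt_length'] at ih ⊢
    have hvne : factorAt x 0 (m+1) ≠ [] := by
      intro h0
      have h5 := factorAt_length' x 0 (m+1)
      rw [h0] at h5; simp at h5
    obtain ⟨S, hS1, hS2, hS3, hS4⟩ := exists_mps _ hvne
    have hnotmem := h m S hS1 hS2 hS4
    rw [factorAt_succ'] at hS1 hS4
    have hc := palSet_concat hS1 hS2 hS4
    rw [factorAt_succ', hc, Set.ncard_insert_of_notMem hnotmem (palSetFin _), ih]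

end PretRichAux

/-- If `φ` is a marked morphism in Class `P_ret`, the language of `u`
is closed under reversal, and `φ(u)` is rich, then `u` is rich. -/
theorem pret_marked_rich_preimage {A : Type*} [Fintype A] [DecidableEq A]
    (φ : A → List A) (w : List A) (h : IsPretWithMarker φ w) (hm : Marked φ)
    (u : ℕ → A) (hcl : ClosedUnderReversal u)
    (hrich : RichInf (applyInf φ u)) : RichInf u := by
  apply rich_of_steps
  intro n s hsuf hspal hsmax hmem
  simp only [Set.mem_setOf_eq] at hmem
  set x := applyInf φ u with hx
  set q := factorAt u 0 (n+1) with hq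
  set Q := applyM φ q ++ w with hQdef
  have hlenq : q.length = n + 1 := factorAt_length' u 0 (n+1)
  have hqne : q ≠ [] := by intro h0; rw [h0] at hlenq; simp at hlenq
  have hsne : s ≠ [] := by
    intro h0
    have h5 := hsmax [q.getLast hqne] ⟨q.dropLast, dropLast_append_getLast hqne⟩ rfl
    rw [h0] at h5; simp at h5
  have hlQ : q.length ≤ (applyM φ q).length := length_le_applyM h q
  have hQlen : Q.length = (applyM φ q).length + w.length := by
    rw [hQdef, length_append]
  have hQpre : Q <+: applyM φ (factorAt u 0 ((n+1) + w.length)) := Q_prefix h u n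
  have hQfac : factorAt x 0 Q.length = Q := image_factor' h u hQpre
  have hQpos : 1 ≤ Q.length := by omega
  obtain ⟨m, hm⟩ : ∃ m, Q.length = m + 1 := ⟨Q.length - 1, by omega⟩
  have hQfne : factorAt x 0 (m+1) ≠ [] := by
    rw [← hm, hQfac]
    intro h0
    rw [h0] at hQpos; simp at hQpos
  obtain ⟨T, hT1, hT2, hT3, hT4⟩ := exists_mps (factorAt x 0 (m+1)) hQfne
  have hTnot : T ∉ {p : List A | p <:+: factorAt x 0 m ∧ p.reverse = p} :=
    rich_step_forward hrich m hT1 hT2 hT4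
  rw [← hm, hQfac] at hT1 hT4
  obtain ⟨z, hz⟩ := hsuf
  have hsw_suf : applyM φ s ++ w <:+ Q := by
    refine ⟨applyM φ z, ?_⟩
    rw [hQdef, ← hz, applyM_append', append_assoc]
  have hsw_pal : (applyM φ s ++ w).reverse = applyM φ s ++ w := by
    rw [reverse_applyM h, hspal]
  have hTlen : (applyM φ s).length + w.length ≤ T.length := by
    have h5 := hT4 _ hsw_suf hsw_pal
    simpa using h5
  have hslen : 1 ≤ s.length := List.length_pos_iff.mpr hsne
  have hs_apl : s.length ≤ (applyM φ s).length := length_le_applyM h s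
  have hwT : w.length < T.length := by omega
  have hwsufT : w <:+ T := by
    rcases suffix_or_suffix_of_suffix (suffix_append (applyM φ q) w) hT1 with h1 | h1
    · exact h1
    · have h5 := h1.length_le; omega
  have hwpreT : w <+: T := by
    have h5 := reverse_prefix.mpr hwsufT
    rwa [h.2.1, hT2] at h5
  obtain ⟨pre, hpre⟩ := hT1
  have hlen1 : pre.length + T.length = Q.length := by
    rw [← hpre]; simp
  have hdropT : Q.drop pre.length = T := by rw [← hpre, drop_left]
  have hslice : ((applyM φ q ++ w).drop pre.length).take w.length = w := by
    rw [← hQdef, hdropT]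
    exact (prefix_iff_eq_take.mp hwpreT).symm
  have hbound : pre.length + w.length ≤ (applyM φ q).length + w.length := by omega
  obtain ⟨t₁, t₂, hq12, hi⟩ := occ_is_partial h q pre.length hbound hslice
  have hT_eq : T = applyM φ t₂ ++ w := by
    rw [← hdropT, hQdef, hq12, applyM_append', append_assoc, hi, drop_left]
  have ht₂pal : t₂.reverse = t₂ := by
    have e := hT2
    rw [hT_eq, reverse_applyM h] at e
    exact applyM_inj h _ _ (append_cancel_right e)
  have ht₂ne : t₂ ≠ [] := by
    intro h0
    rw [h0] at hT_eq
    simp [applyM] at hT_eq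
    rw [hT_eq] at hwT
    omega
  have ht₂suf : t₂ <:+ q := ⟨t₁, hq12.symm⟩
  have ht₂len : t₂.length ≤ s.length := hsmax t₂ ht₂suf ht₂pal
  have happlen : (applyM φ s).length ≤ (applyM φ t₂).length := by
    have h5 : T.length = (applyM φ t₂).length + w.length := by
      rw [hT_eq, length_append]
    omega
  have hst : s = t₂ := by
    rcases suffix_or_suffix_of_suffix ⟨z, hz⟩ ht₂suf with h1 | h1
    · obtain ⟨r, hr⟩ := h1
      have h5 : r.length + s.length = t₂.length := by
        rw [← hr, length_append]
      have hr0 : r = [] := List.length_eq_zero_iff.mp (by omega)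
      rw [hr0] at hr
      simpa using hr
    · obtain ⟨r, hr⟩ := h1
      have h5 : (applyM φ r).length + (applyM φ t₂).length = (applyM φ s).length := by
        rw [← hr, applyM_append', length_append]
      have h6 := length_le_applyM h r
      have hr0 : r = [] := List.length_eq_zero_iff.mp (by omega)
      rw [hr0] at hr
      simpa using hr.symm
  rw [← hst] at hT_eq
  apply hTnot
  obtain ⟨x₁, y₁, hxy⟩ := hmem.1
  have hq_split : q = x₁ ++ s ++ (y₁ ++ [u n]) := by
    rw [hq, factorAt_succ', ← hxy]
    simp [append_assoc]
  obtain ⟨R₂, hR₂⟩ := w_prefix_applyM h (y₁ ++ [u n])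
  have hR₂pos : 1 ≤ R₂.length := by
    have e := congrArg List.length hR₂
    simp only [length_append] at e
    have h5 := length_le_applyM h (y₁ ++ [u n])
    simp only [length_append, length_cons, length_nil] at h5
    omega
  have hR₂ne : R₂ ≠ [] := by intro h0; rw [h0] at hR₂pos; simp at hR₂pos
  have hQ_split : Q = (applyM φ x₁ ++ (applyM φ s ++ w)) ++ R₂ := by
    rw [hQdef, hq_split, applyM_append', applyM_append', append_assoc, append_assoc, ← hR₂]
    simp [append_assoc]
  have hmC : m = (applyM φ x₁ ++ (applyM φ s ++ w)).length + (R₂.length - 1) := by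
    have h5 : Q.length = (applyM φ x₁ ++ (applyM φ s ++ w)).length + R₂.length := by
      rw [hQ_split, length_append]
    omega
  have hfac_m : factorAt x 0 m = (applyM φ x₁ ++ (applyM φ s ++ w)) ++ R₂.dropLast := by
    have hP : (applyM φ x₁ ++ (applyM φ s ++ w)) ++ R₂.dropLast
        <+: applyM φ (factorAt u 0 ((n+1) + w.length)) := by
      apply IsPrefix.trans ?_ hQpre
      refine ⟨[R₂.getLast hR₂ne], ?_⟩
      rw [hQ_split, append_assoc, dropLast_append_getLast hR₂ne]
    have h5 := image_factor' h u hP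
    rwa [show ((applyM φ x₁ ++ (applyM φ s ++ w)) ++ R₂.dropLast).length = m by
      rw [length_append, length_dropLast]; omega] at h5
  refine ⟨?_, hT2⟩
  rw [hfac_m, hT_eq]
  exact ⟨applyM φ x₁, R₂.dropLast, by simp [append_assoc]⟩
end

section
/- Let φ be an Arnoux-Rauzy morphism over a finite alphabet A and let u ∈ A^ℕ be an infinite word whose language L(u) is closed under reversal. Then u is rich if and only if φ(u) is rich. -/
open List

section PalCount

set_option linter.unusedSectionVars false

variable {A : Type*} [DecidableEq A]

/-- Finset of palindromic factors of `w`. -/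
def palF (w : List A) : Finset (List A) :=
  (w.tails.flatMap List.inits).toFinset.filter (fun p => p.reverse = p)

lemma mem_palF {w p : List A} : p ∈ palF w ↔ p <:+: w ∧ p.reverse = p := by
  simp only [palF, Finset.mem_filter, List.mem_toFinset, List.mem_flatMap,
    List.mem_tails, List.mem_inits, List.infix_iff_prefix_suffix]
  tauto

lemma palF_nil : palF ([] : List A) = {[]} := by
  ext p
  simp only [mem_palF, Finset.mem_singleton]
  constructor
  · rintro ⟨h, -⟩
    simpa using h.length_le
  · rintro rfl; simp

lemma nil_mem_palF (w : List A) : [] ∈ palF w := by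
  simp [mem_palF]

lemma palF_mono {w v : List A} (h : w <:+: v) : palF w ⊆ palF v := by
  intro p hp
  rw [mem_palF] at hp ⊢
  exact ⟨hp.1.trans h, hp.2⟩

lemma infix_of_infix_concat {w : List A} {x : A} {q : List A}
    (h : q <:+: w ++ [x]) (hs : ¬ q <:+ w ++ [x]) : q <:+: w := by
  obtain ⟨s, t, hst⟩ := h
  rcases eq_or_ne t [] with rfl | ht
  · exact absurd ⟨s, by simpa using hst⟩ hs
  · have h2 : (s ++ q ++ t.dropLast) ++ [t.getLast ht] = w ++ [x] := by
      have := List.dropLast_append_getLast ht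
      calc (s ++ q ++ t.dropLast) ++ [t.getLast ht]
          = s ++ q ++ (t.dropLast ++ [t.getLast ht]) := by simp [List.append_assoc]
        _ = s ++ q ++ t := by rw [this]
        _ = w ++ [x] := hst
    have h3 : s ++ q ++ t.dropLast = w := by
      have := congrArg List.dropLast h2
      simpa [List.dropLast_concat] using this
    exact ⟨s, t.dropLast, h3⟩


/-- Two "new" palindromes after appending one letter coincide. -/
lemma newPal_unique {w : List A} {x : A} {q₁ q₂ : List A}
    (h₁ : q₁ <:+: w ++ [x]) (p₁ : q₁.reverse = q₁) (n₁ : ¬ q₁ <:+: w)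
    (h₂ : q₂ <:+: w ++ [x]) (p₂ : q₂.reverse = q₂) (n₂ : ¬ q₂ <:+: w) : q₁ = q₂ := by
  have key : ∀ q₁ q₂ : List A, q₁ <:+: w ++ [x] → q₁.reverse = q₁ → ¬ q₁ <:+: w →
      q₂ <:+: w ++ [x] → q₂.reverse = q₂ → ¬ q₂ <:+: w →
      q₁.length ≤ q₂.length → q₁ = q₂ := by
    intro q₁ q₂ h₁ p₁ n₁ h₂ p₂ n₂ hlen
    have s₁ : q₁ <:+ w ++ [x] := by
      by_contra hns
      exact n₁ (infix_of_infix_concat h₁ hns)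
    have s₂ : q₂ <:+ w ++ [x] := by
      by_contra hns
      exact n₂ (infix_of_infix_concat h₂ hns)
    have hsuf : q₁ <:+ q₂ := List.suffix_of_suffix_length_le s₁ s₂ hlen
    rcases eq_or_lt_of_le hlen with heq | hlt
    · exact (List.IsSuffix.eq_of_length hsuf heq)
    · exfalso
      -- q₁ is a prefix of q₂, hence occurs in w
      have hpre : q₁ <+: q₂ := List.reverse_suffix.mp (by rw [p₁, p₂]; exact hsuf)
      obtain ⟨r, hr⟩ := hpre
      have hrne : r ≠ [] := by
        intro hrnil
        rw [hrnil, List.append_nil] at hr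
        rw [hr] at hlt
        omega
      obtain ⟨s, hs⟩ := s₂
      -- w ++ [x] = s ++ q₁ ++ r , r ≠ []
      have h2 : (s ++ q₁ ++ r.dropLast) ++ [r.getLast hrne] = w ++ [x] := by
        have hd := List.dropLast_append_getLast hrne
        calc (s ++ q₁ ++ r.dropLast) ++ [r.getLast hrne]
            = s ++ (q₁ ++ (r.dropLast ++ [r.getLast hrne])) := by simp [List.append_assoc]
          _ = s ++ (q₁ ++ r) := by rw [hd]
          _ = s ++ q₂ := by rw [hr]
          _ = w ++ [x] := hs
      have h3 : s ++ q₁ ++ r.dropLast = w := by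
        have := congrArg List.dropLast h2
        simpa [List.dropLast_concat] using this
      exact n₁ ⟨s, r.dropLast, h3⟩
  rcases le_total q₁.length q₂.length with h | h
  · exact key q₁ q₂ h₁ p₁ n₁ h₂ p₂ n₂ h
  · exact (key q₂ q₁ h₂ p₂ n₂ h₁ p₁ n₁ h).symm

lemma palF_concat_card_le (w : List A) (x : A) :
    (palF (w ++ [x])).card ≤ (palF w).card + 1 := by
  classical
  have hmono : palF w ⊆ palF (w ++ [x]) := palF_mono ⟨[], [x], by simp⟩
  have hD : (palF (w ++ [x]) \ palF w).card ≤ 1 := by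
    rw [Finset.card_le_one]
    intro p hp q hq
    simp only [Finset.mem_sdiff, mem_palF] at hp hq
    exact newPal_unique hp.1.1 hp.1.2 (fun h => hp.2 ⟨h, hp.1.2⟩)
      hq.1.1 hq.1.2 (fun h => hq.2 ⟨h, hq.1.2⟩)
  calc (palF (w ++ [x])).card = (palF w ∪ (palF (w ++ [x]) \ palF w)).card := by
        rw [Finset.union_sdiff_of_subset hmono]
    _ ≤ (palF w).card + (palF (w ++ [x]) \ palF w).card := Finset.card_union_le _ _
    _ ≤ (palF w).card + 1 := by omega

lemma palF_concat_card_eq {w : List A} {x : A} {q : List A}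
    (hq : q.reverse = q) (hsuf : q <:+ w ++ [x]) (hnew : ¬ q <:+: w) :
    (palF (w ++ [x])).card = (palF w).card + 1 := by
  have hmono : palF w ⊆ palF (w ++ [x]) := palF_mono ⟨[], [x], by simp⟩
  have hmem : q ∈ palF (w ++ [x]) := mem_palF.mpr ⟨hsuf.isInfix, hq⟩
  have hnotmem : q ∉ palF w := fun h => hnew (mem_palF.mp h).1
  have hlt : (palF w).card < (palF (w ++ [x])).card :=
    Finset.card_lt_card (Finset.ssubset_iff_of_subset hmono |>.mpr ⟨q, hmem, hnotmem⟩)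
  have := palF_concat_card_le w x
  omega

lemma exists_newPal_of_card_lt {w : List A} {x : A}
    (h : (palF w).card < (palF (w ++ [x])).card) :
    ∃ q : List A, q.reverse = q ∧ q <:+ w ++ [x] ∧ ¬ q <:+: w := by
  have : ¬ (palF (w ++ [x]) ⊆ palF w) := fun hsub => by
    have := Finset.card_le_card hsub; omega
  obtain ⟨q, hq, hqn⟩ := Finset.not_subset.mp this
  rw [mem_palF] at hq
  have hnew : ¬ q <:+: w := fun hi => hqn (mem_palF.mpr ⟨hi, hq.2⟩)
  refine ⟨q, hq.2, ?_, hnew⟩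
  by_contra hns
  exact hnew (infix_of_infix_concat hq.1 hns)

end PalCount


section RichA

set_option linter.unusedSectionVars false

variable {A : Type*} [DecidableEq A]

lemma richWord_iff_card {w : List A} : RichWord w ↔ (palF w).card = w.length + 1 := by
  have hset : {p : List A | p <:+: w ∧ p.reverse = p} = ↑(palF w) := by
    ext p; simp [mem_palF]
  rw [RichWord, hset, Set.ncard_coe_finset]

lemma take_succ_concat {w : List A} {n : ℕ} (h : n < w.length) :
    w.take (n + 1) = w.take n ++ [w[n]] := by
  rw [← List.take_concat_get h, List.concat_eq_append]

lemma card_palF_take_succ_le (w : List A) (n : ℕ) :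
    (palF (w.take (n + 1))).card ≤ (palF (w.take n)).card + 1 := by
  rcases lt_or_ge n w.length with h | h
  · rw [take_succ_concat h]
    exact palF_concat_card_le _ _
  · rw [List.take_of_length_le h, List.take_of_length_le (by omega)]
    omega

lemma card_palF_take_le (w : List A) : ∀ n, (palF (w.take n)).card ≤ n + 1 := by
  intro n
  induction n with
  | zero => simp [palF_nil]
  | succ n ih => have := card_palF_take_succ_le w n; omega

lemma rich_iff_steps {w : List A} : RichWord w ↔
    ∀ n < w.length, (palF (w.take (n + 1))).card = (palF (w.take n)).card + 1 := by
  rw [richWord_iff_card]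
  constructor
  · intro hrich n hn
    have hle := card_palF_take_succ_le w n
    by_contra hne
    have hstep : (palF (w.take (n + 1))).card ≤ (palF (w.take n)).card := by omega
    have key : ∀ j, (palF (w.take (n + 1 + j))).card ≤ n + 1 + j := by
      intro j
      induction j with
      | zero =>
          simp only [Nat.add_zero]
          have := card_palF_take_le w n; omega
      | succ j ih =>
          have := card_palF_take_succ_le w (n + 1 + j)
          have e : n + 1 + (j + 1) = (n + 1 + j) + 1 := by omega
          rw [e]; omega
    have := key (w.length - (n + 1))
    rw [show n + 1 + (w.length - (n + 1)) = w.length by omega, List.take_length] at this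
    omega
  · intro hstep
    have key : ∀ n ≤ w.length, (palF (w.take n)).card = n + 1 := by
      intro n
      induction n with
      | zero => intro _; simp [palF_nil]
      | succ n ih =>
          intro hn
          rw [hstep n (by omega), ih (by omega)]
    have := key w.length le_rfl
    rwa [List.take_length] at this

lemma rich_iff_newPal {w : List A} : RichWord w ↔
    ∀ n < w.length, ∃ q : List A, q.reverse = q ∧ q <:+ w.take (n + 1) ∧ ¬ q <:+: w.take n := by
  rw [rich_iff_steps]
  constructor
  · intro h n hn
    have := h n hn
    have hlt : (palF (w.take n)).card < (palF (w.take (n + 1))).card := by omega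
    rw [take_succ_concat hn] at hlt ⊢
    exact exists_newPal_of_card_lt hlt
  · intro h n hn
    obtain ⟨q, hq, hsuf, hnew⟩ := h n hn
    rw [take_succ_concat hn] at hsuf ⊢
    exact palF_concat_card_eq hq hsuf hnew

lemma rich_of_prefix {w p : List A} (h : p <+: w) (hw : RichWord w) : RichWord p := by
  obtain ⟨t, ht⟩ := h
  have hlen : p.length ≤ w.length := by
    rw [← ht]; simp
  have hpw : p = w.take p.length := by
    rw [← ht, List.take_left]
  rw [rich_iff_newPal] at hw ⊢
  intro n hn
  have h1 : p.take (n + 1) = w.take (n + 1) := by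
    rw [hpw, List.take_take, min_eq_left (by omega)]
  have h2 : p.take n = w.take n := by
    rw [hpw, List.take_take, min_eq_left (by omega)]
  rw [h1, h2]
  exact hw n (by omega)

lemma palF_reverse (w : List A) : palF w.reverse = palF w := by
  ext p
  simp only [mem_palF]
  constructor
  · rintro ⟨hi, hp⟩
    refine ⟨?_, hp⟩
    have : p.reverse <:+: w.reverse.reverse := hi.reverse
    rwa [hp, List.reverse_reverse] at this
  · rintro ⟨hi, hp⟩
    refine ⟨?_, hp⟩
    have : p.reverse <:+: w.reverse := hi.reverse
    rwa [hp] at this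

lemma rich_reverse_iff {w : List A} : RichWord w.reverse ↔ RichWord w := by
  rw [richWord_iff_card, richWord_iff_card, palF_reverse, List.length_reverse]

lemma rich_of_infix {w t : List A} (h : t <:+: w) (hw : RichWord w) : RichWord t := by
  obtain ⟨s, hpre, hsuf⟩ := List.infix_iff_prefix_suffix.mp h
  have hs : RichWord s := by
    have h1 : s.reverse <+: w.reverse := List.reverse_prefix.mpr hsuf
    have h2 : RichWord w.reverse := rich_reverse_iff.mpr hw
    exact rich_reverse_iff.mp (rich_of_prefix h1 h2)
  exact rich_of_prefix hpre hs

lemma rich_nil : RichWord ([] : List A) := by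
  rw [richWord_iff_card, palF_nil]; simp

lemma rich_concat_of_new {w : List A} {x : A} (hw : RichWord w)
    (h : ∃ q : List A, q.reverse = q ∧ q <:+ w ++ [x] ∧ ¬ q <:+: w) :
    RichWord (w ++ [x]) := by
  rw [rich_iff_newPal] at hw ⊢
  intro n hn
  have hn : n < w.length + 1 := by simpa using hn
  rcases lt_or_ge n w.length with h1 | h1
  · have e1 : (w ++ [x]).take (n + 1) = w.take (n + 1) := by
      rw [List.take_append, show n + 1 - w.length = 0 by omega]
      simp
    have e2 : (w ++ [x]).take n = w.take n := by
      rw [List.take_append, show n - w.length = 0 by omega]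
      simp
    rw [e1, e2]
    exact hw n h1
  · have hn' : n = w.length := by omega
    subst hn'
    obtain ⟨q, hq1, hq2, hq3⟩ := h
    refine ⟨q, hq1, ?_, ?_⟩
    · rwa [List.take_of_length_le (by simp)]
    · rwa [List.take_append, List.take_length, Nat.sub_self, List.take_zero,
        List.append_nil]
end RichA

section Psi

set_option linter.unusedSectionVars false

variable {A : Type*} [DecidableEq A] {a : A}

/-- The elementary morphism ψ_a on letters. -/
def psiL' (a : A) : A → List A := fun b => if b = a then [a] else [a, b]

/-- Ψ applied to words. -/
def PsiW (a : A) (w : List A) : List A := w.flatMap (psiL' a)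

lemma psiL'_eq (c : A) : psiL' a c = [a] ∧ c = a ∨ psiL' a c = [a, c] ∧ c ≠ a := by
  unfold psiL'
  by_cases h : c = a
  · subst h; simp
  · simp [h]

lemma PsiW_nil : PsiW a [] = [] := rfl

lemma PsiW_append (w v : List A) : PsiW a (w ++ v) = PsiW a w ++ PsiW a v :=
  List.flatMap_append

lemma PsiW_cons (c : A) (w : List A) : PsiW a (c :: w) = psiL' a c ++ PsiW a w := rfl

lemma PsiW_head (w : List A) : ∃ t : List A, PsiW a w ++ [a] = a :: t := by
  cases w with
  | nil => exact ⟨[], rfl⟩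
  | cons c w =>
      rw [PsiW_cons]
      rcases psiL'_eq (a := a) c with ⟨h, _⟩ | ⟨h, _⟩ <;> rw [h] <;> exact ⟨_, rfl⟩

lemma PsiW_head' {w : List A} (hw : w ≠ []) : ∃ t : List A, PsiW a w = a :: t := by
  cases w with
  | nil => exact absurd rfl hw
  | cons c w =>
      rw [PsiW_cons]
      rcases psiL'_eq (a := a) c with ⟨h, _⟩ | ⟨h, _⟩ <;> rw [h] <;> exact ⟨_, rfl⟩

lemma PsiW_ne_nil {w : List A} (hw : w ≠ []) : PsiW a w ≠ [] := by
  obtain ⟨t, ht⟩ := PsiW_head' (a := a) hw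
  simp [ht]

lemma psiL'_rev (c : A) : [a] ++ (psiL' a c).reverse = psiL' a c ++ [a] := by
  rcases psiL'_eq (a := a) c with ⟨h, _⟩ | ⟨h, _⟩ <;> rw [h] <;> simp

lemma PsiW_reverse (w : List A) :
    (PsiW a w ++ [a]).reverse = PsiW a w.reverse ++ [a] := by
  induction w with
  | nil => simp [PsiW_nil]
  | cons c w ih =>
      have h1 : (PsiW a (c :: w) ++ [a]) = psiL' a c ++ (PsiW a w ++ [a]) := by
        rw [PsiW_cons, List.append_assoc]
      rw [h1, List.reverse_append, ih, List.reverse_cons, PsiW_append]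
      rw [List.append_assoc (PsiW a w.reverse), psiL'_rev c]
      simp [PsiW, List.append_assoc]

lemma PsiW_pal {q : List A} (hq : q.reverse = q) :
    (PsiW a q ++ [a]).reverse = PsiW a q ++ [a] := by
  rw [PsiW_reverse, hq]

lemma PsiW_inj : ∀ {x y : List A}, PsiW a x = PsiW a y → x = y := by
  intro x
  induction x with
  | nil =>
      intro y h
      cases y with
      | nil => rfl
      | cons d y' => exact absurd h.symm (PsiW_ne_nil (by simp))
  | cons c x' ih =>
      intro y h
      cases y with
      | nil => exact absurd h (PsiW_ne_nil (by simp))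
      | cons d y' =>
          rw [PsiW_cons, PsiW_cons] at h
          rcases psiL'_eq (a := a) c with ⟨hc, hca⟩ | ⟨hc, hca⟩ <;>
            rcases psiL'_eq (a := a) d with ⟨hd, hda⟩ | ⟨hd, hda⟩ <;>
            rw [hc, hd] at h <;>
            simp only [List.cons_append, List.nil_append] at h
          · injection h with _ h
            rw [hca, hda, ih h]
          · exfalso
            injection h with _ h
            rcases eq_or_ne x' [] with rfl | hx
            · rw [PsiW_nil] at h; exact List.cons_ne_nil _ _ h.symm
            · obtain ⟨t, ht⟩ := PsiW_head' (a := a) hx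
              rw [ht] at h
              injection h with h1 _
              exact hda h1.symm
          · exfalso
            injection h with _ h
            rcases eq_or_ne y' [] with rfl | hy
            · rw [PsiW_nil] at h; exact List.cons_ne_nil _ _ h
            · obtain ⟨t, ht⟩ := PsiW_head' (a := a) hy
              rw [ht] at h
              injection h with h1 _
              exact hca h1
          · injection h with _ h
            injection h with h1 h2
            rw [h1, ih h2]

lemma pal_of_PsiW_pal {q : List A} (hpal : (PsiW a q ++ [a]).reverse = PsiW a q ++ [a]) :
    q.reverse = q := by
  rw [PsiW_reverse] at hpal
  exact PsiW_inj (List.append_cancel_right hpal)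

lemma suffix_append_cases {t x y : List A} (h : t <:+ x ++ y) :
    t <:+ y ∨ ∃ x' : List A, x' <:+ x ∧ x' ≠ [] ∧ t = x' ++ y := by
  rcases le_or_gt t.length y.length with hle | hlt
  · exact Or.inl (List.suffix_of_suffix_length_le h (List.suffix_append x y) hle)
  · right
    have hxy : t.length ≤ x.length + y.length := by
      have := h.length_le; simpa using this
    rw [List.suffix_iff_eq_drop, List.length_append] at h
    refine ⟨x.drop (x.length + y.length - t.length), List.drop_suffix _ _, ?_, ?_⟩
    · intro hnil
      have := congrArg List.length hnil
      rw [List.length_drop, List.length_nil] at this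
      omega
    · conv_lhs => rw [h]
      rw [List.drop_append,
        show x.length + y.length - t.length - x.length = 0 by omega, List.drop_zero]

lemma length_PsiW_concat_pos (q : List A) : 1 ≤ (PsiW a q ++ [a]).length := by
  simp

/-- Prefix synchronization. -/
lemma PL : ∀ (q w : List A), PsiW a q ++ [a] <+: PsiW a w ++ [a] → q <+: w := by
  intro q
  induction q with
  | nil => intro w _; exact List.nil_prefix
  | cons d q' ih =>
      intro w h
      cases w with
      | nil =>
          exfalso
          have h1 := h.length_le
          rw [PsiW_cons] at h1
          rcases psiL'_eq (a := a) d with ⟨hd, _⟩ | ⟨hd, _⟩ <;> rw [hd] at h1 <;>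
            simp [PsiW_nil] at h1
      | cons c w' =>
          rw [PsiW_cons, PsiW_cons, List.append_assoc, List.append_assoc] at h
          obtain ⟨t, ht⟩ := PsiW_head (a := a) q'
          obtain ⟨s, hs⟩ := PsiW_head (a := a) w'
          rcases psiL'_eq (a := a) d with ⟨hd, hda⟩ | ⟨hd, hda⟩ <;>
            rcases psiL'_eq (a := a) c with ⟨hc, hca⟩ | ⟨hc, hca⟩ <;>
            rw [hd, hc] at h <;>
            simp only [List.cons_append, List.nil_append] at h <;>
            rw [List.cons_prefix_cons] at h
          · -- d = a, c = a
            exact List.cons_prefix_cons.mpr ⟨hda.trans hca.symm, ih w' h.2⟩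
          · -- d = a, c ≠ a : tail : PsiW q' ++ [a] <+: c :: (PsiW w' ++ [a])
            exfalso
            rw [ht] at h
            rw [List.cons_prefix_cons] at h
            exact hca h.2.1.symm
          · -- d ≠ a, c = a
            exfalso
            have h2 := h.2
            rw [hs] at h2
            rw [List.cons_prefix_cons] at h2
            exact hda h2.1
          · -- d ≠ a, c ≠ a
            obtain ⟨-, h2⟩ := h
            rw [List.cons_prefix_cons] at h2
            exact List.cons_prefix_cons.mpr ⟨h2.1, ih w' h2.2⟩

lemma PsiW_head2 (r : List A) (b : A) : ∃ t : List A, PsiW a r ++ [a, b] = a :: t := by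
  obtain ⟨t, ht⟩ := PsiW_head (a := a) r
  refine ⟨t ++ [b], ?_⟩
  have : PsiW a r ++ [a, b] = (PsiW a r ++ [a]) ++ [b] := by simp
  rw [this, ht]
  rfl

/-- Prefix synchronization, second type. -/
lemma PL2 {b : A} (hb : b ≠ a) :
    ∀ (r w : List A), PsiW a r ++ [a, b] <+: PsiW a w ++ [a] → r ++ [b] <+: w := by
  intro r
  induction r with
  | nil =>
      intro w h
      rw [PsiW_nil, List.nil_append] at h
      cases w with
      | nil =>
          exfalso
          have := h.length_le
          simp [PsiW_nil] at this
      | cons c w' =>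
          rw [PsiW_cons, List.append_assoc] at h
          rcases psiL'_eq (a := a) c with ⟨hc, hca⟩ | ⟨hc, hca⟩ <;> rw [hc] at h <;>
            simp only [List.cons_append, List.nil_append] at h <;>
            rw [List.cons_prefix_cons] at h
          · exfalso
            obtain ⟨t, ht⟩ := PsiW_head (a := a) w'
            have h2 := h.2
            rw [ht, List.cons_prefix_cons] at h2
            exact hb h2.1
          · have h2 := h.2
            rw [List.cons_prefix_cons] at h2
            exact List.cons_prefix_cons.mpr ⟨h2.1, List.nil_prefix⟩
  | cons d r' ih =>
      intro w h
      cases w with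
      | nil =>
          exfalso
          have h1 := h.length_le
          rw [PsiW_cons] at h1
          rcases psiL'_eq (a := a) d with ⟨hd, _⟩ | ⟨hd, _⟩ <;> rw [hd] at h1 <;>
            simp [PsiW_nil] at h1
      | cons c w' =>
          rw [PsiW_cons, PsiW_cons, List.append_assoc, List.append_assoc] at h
          obtain ⟨t, ht⟩ := PsiW_head2 (a := a) r' b
          obtain ⟨s, hs⟩ := PsiW_head (a := a) w'
          rcases psiL'_eq (a := a) d with ⟨hd, hda⟩ | ⟨hd, hda⟩ <;>
            rcases psiL'_eq (a := a) c with ⟨hc, hca⟩ | ⟨hc, hca⟩ <;>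
            rw [hd, hc] at h <;>
            simp only [List.cons_append, List.nil_append] at h <;>
            rw [List.cons_prefix_cons] at h
          · -- d = a, c = a
            have := ih w' h.2
            refine List.cons_prefix_cons.mpr ⟨hda.trans hca.symm, this⟩
          · exfalso
            have h2 := h.2
            rw [ht, List.cons_prefix_cons] at h2
            exact hca h2.1.symm
          · exfalso
            have h2 := h.2
            rw [hs, List.cons_prefix_cons] at h2
            exact hda h2.1
          · obtain ⟨-, h2⟩ := h
            rw [List.cons_prefix_cons] at h2
            exact List.cons_prefix_cons.mpr ⟨h2.1, ih w' h2.2⟩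

lemma suffix_singleton {x' : List A} {u : A} (h : x' <:+ [u]) (hne : x' ≠ []) : x' = [u] := by
  rcases List.suffix_cons_iff.mp h with h1 | h1
  · exact h1
  · exact absurd (List.suffix_nil.mp h1) hne

lemma suffix_pair {x' : List A} {u v : A} (h : x' <:+ [u, v]) (hne : x' ≠ []) :
    x' = [u, v] ∨ x' = [v] := by
  rcases List.suffix_cons_iff.mp h with h1 | h1
  · exact Or.inl h1
  · exact Or.inr (suffix_singleton h1 hne)

/-- Infix synchronization. -/
lemma SL : ∀ (w q : List A), PsiW a q ++ [a] <:+: PsiW a w ++ [a] → q <:+: w := by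
  intro w
  induction w with
  | nil =>
      intro q h
      cases q with
      | nil => exact List.nil_infix
      | cons d q' =>
          exfalso
          have h1 := h.length_le
          rw [PsiW_cons] at h1
          rcases psiL'_eq (a := a) d with ⟨hd, _⟩ | ⟨hd, _⟩ <;> rw [hd] at h1 <;>
            simp [PsiW_nil] at h1
  | cons c w' ih =>
      intro q h
      obtain ⟨t, hpre, hsuf⟩ := List.infix_iff_prefix_suffix.mp h
      rw [PsiW_cons, List.append_assoc] at hsuf
      rcases suffix_append_cases hsuf with hcase | ⟨x', hx1, hx2, rfl⟩
      · exact (ih q (List.infix_iff_prefix_suffix.mpr ⟨t, hpre, hcase⟩)).trans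
          ⟨[c], [], by simp⟩
      · rcases psiL'_eq (a := a) c with ⟨hc, hca⟩ | ⟨hc, hca⟩ <;> rw [hc] at hx1
        · have hx : x' = [a] := suffix_singleton hx1 hx2
          subst hx
          exact (PL q (c :: w') (by rw [PsiW_cons, hc, List.append_assoc]; exact hpre)).isInfix
        · rcases suffix_pair hx1 hx2 with rfl | rfl
          · exact (PL q (c :: w') (by rw [PsiW_cons, hc, List.append_assoc]; exact hpre)).isInfix
          · -- x' = [c] : head mismatch
            exfalso
            obtain ⟨u, hu⟩ := PsiW_head (a := a) q
            rw [hu, List.singleton_append, List.cons_prefix_cons] at hpre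
            exact hca hpre.1.symm

/-- Infix synchronization, second type. -/
lemma SL2 {b : A} (hb : b ≠ a) :
    ∀ (w r : List A), [b] ++ (PsiW a r ++ [a, b]) <:+: PsiW a w ++ [a] →
      [b] ++ r ++ [b] <:+: w := by
  intro w
  induction w with
  | nil =>
      intro r h
      exfalso
      have h1 := h.length_le
      simp [PsiW_nil] at h1
  | cons c w' ih =>
      intro r h
      obtain ⟨t, hpre, hsuf⟩ := List.infix_iff_prefix_suffix.mp h
      rw [PsiW_cons, List.append_assoc] at hsuf
      rcases suffix_append_cases hsuf with hcase | ⟨x', hx1, hx2, rfl⟩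
      · exact (ih r (List.infix_iff_prefix_suffix.mpr ⟨t, hpre, hcase⟩)).trans
          ⟨[c], [], by simp⟩
      · rcases psiL'_eq (a := a) c with ⟨hc, hca⟩ | ⟨hc, hca⟩ <;> rw [hc] at hx1
        · have hx : x' = [a] := suffix_singleton hx1 hx2
          subst hx
          exfalso
          rw [List.singleton_append, List.singleton_append, List.cons_prefix_cons] at hpre
          exact hb hpre.1
        · rcases suffix_pair hx1 hx2 with rfl | rfl
          · exfalso
            simp only [List.singleton_append, List.cons_append, List.nil_append] at hpre
            rw [List.cons_prefix_cons] at hpre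
            exact hb hpre.1
          · -- x' = [c] : b = c and then tail via PL2
            rw [List.singleton_append, List.singleton_append, List.cons_prefix_cons] at hpre
            obtain ⟨rfl, hpre2⟩ := hpre
            have := PL2 hb r w' hpre2
            obtain ⟨z, hz⟩ := this
            refine ⟨[], w'.drop (r ++ [b]).length, ?_⟩
            rw [List.nil_append]
            have : b :: (r ++ [b]) ++ z = b :: w' := by
              rw [List.cons_append, hz]
            rw [← hz]
            simp [List.append_assoc]

lemma singleton_infix_iff_mem {b : A} {l : List A} : [b] <:+: l ↔ b ∈ l := by
  constructor
  · rintro ⟨s, t, rfl⟩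
    simp
  · intro h
    obtain ⟨s, t, rfl⟩ := List.append_of_mem h
    exact ⟨s, t, by simp⟩

lemma SL_letter {b : A} (hb : b ≠ a) {w : List A} (h : [b] <:+: PsiW a w ++ [a]) :
    [b] <:+: w := by
  rw [singleton_infix_iff_mem] at h ⊢
  rcases List.mem_append.mp h with h1 | h1
  · obtain ⟨c, hc, hbc⟩ := List.mem_flatMap.mp h1
    rcases psiL'_eq (a := a) c with ⟨hcc, _⟩ | ⟨hcc, hca⟩ <;> rw [hcc] at hbc
    · simp at hbc
      exact absurd hbc hb
    · simp at hbc
      rcases hbc with h2 | h2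
      · exact absurd h2 hb
      · exact h2 ▸ hc
  · simp at h1
    exact absurd h1 hb

lemma pal_getLast?_eq_head? {p : List A} (hp : p.reverse = p) : p.getLast? = p.head? := by
  rw [← List.head?_reverse, hp]

/-- Classification of palindromic suffixes of `Ψ(w)a`. -/
lemma SL3 : ∀ (w p : List A), p.reverse = p → p ≠ [] → p <:+ PsiW a w ++ [a] →
    ∃ q : List A, q <:+ w ∧ q.reverse = q ∧ p = PsiW a q ++ [a] := by
  intro w
  induction w with
  | nil =>
      intro p hpal hne hsuf
      rw [PsiW_nil, List.nil_append] at hsuf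
      exact ⟨[], List.nil_suffix, rfl, by rw [suffix_singleton hsuf hne, PsiW_nil]; rfl⟩
  | cons c w' ih =>
      intro p hpal hne hsuf
      rw [PsiW_cons, List.append_assoc] at hsuf
      rcases suffix_append_cases hsuf with hcase | ⟨x', hx1, hx2, rfl⟩
      · obtain ⟨q, hq1, hq2, hq3⟩ := ih p hpal hne hcase
        exact ⟨q, hq1.trans ⟨[c], rfl⟩, hq2, hq3⟩
      · have hfull : ∀ (hxc : x' = psiL' a c),
            ∃ q : List A, q <:+ c :: w' ∧ q.reverse = q ∧
              x' ++ (PsiW a w' ++ [a]) = PsiW a q ++ [a] := by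
          intro hxc
          refine ⟨c :: w', List.suffix_refl _, ?_, ?_⟩
          · have heq : x' ++ (PsiW a w' ++ [a]) = PsiW a (c :: w') ++ [a] := by
              rw [hxc, PsiW_cons, List.append_assoc]
            exact pal_of_PsiW_pal (a := a) (q := c :: w') (by rw [← heq]; exact hpal)
          · rw [hxc, PsiW_cons, List.append_assoc]
        rcases psiL'_eq (a := a) c with ⟨hc, hca⟩ | ⟨hc, hca⟩ <;> rw [hc] at hx1
        · exact hfull (by rw [suffix_singleton hx1 hx2, hc])
        · rcases suffix_pair hx1 hx2 with rfl | rfl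
          · exact hfull (by rw [hc])
          · -- x' = [c] : p = c :: (...) ends with a, pal → c = a contradiction
            exfalso
            have hlast : (([c] : List A) ++ (PsiW a w' ++ [a])).getLast? = some a := by
              rw [List.getLast?_append]
              simp
            have hhead : (([c] : List A) ++ (PsiW a w' ++ [a])).head? = some c := by
              simp
            have := pal_getLast?_eq_head? hpal
            rw [hlast, hhead] at this
            exact hca (by injection this with h2; exact h2.symm)

lemma PsiW_suffix {q w : List A} (h : q <:+ w) : PsiW a q ++ [a] <:+ PsiW a w ++ [a] := by
  obtain ⟨s, rfl⟩ := h
  rw [PsiW_append, List.append_assoc]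
  exact ⟨PsiW a s, rfl⟩

lemma PsiW_infix_concat {q w : List A} (h : q <:+: w) :
    PsiW a q ++ [a] <:+: PsiW a w ++ [a] := by
  obtain ⟨s, t, rfl⟩ := h
  rcases eq_or_ne t [] with rfl | ht
  · rw [List.append_nil]
    exact (PsiW_suffix ⟨s, rfl⟩).isInfix
  · obtain ⟨z, hz⟩ := PsiW_head' (a := a) ht
    refine ⟨PsiW a s, z ++ [a], ?_⟩
    rw [PsiW_append, PsiW_append, hz]
    simp [List.append_assoc]

lemma exists_newPal_concat {w : List A} {x : A} (h : RichWord (w ++ [x])) :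
    ∃ q : List A, q.reverse = q ∧ q <:+ w ++ [x] ∧ ¬ q <:+: w := by
  rw [rich_iff_newPal] at h
  obtain ⟨q, hq1, hq2, hq3⟩ := h w.length (by simp)
  refine ⟨q, hq1, ?_, ?_⟩
  · rwa [List.take_of_length_le (by simp)] at hq2
  · rwa [List.take_append, List.take_length, Nat.sub_self, List.take_zero,
      List.append_nil] at hq3

lemma getLast?_of_suffix {l₁ l₂ : List A} (h : l₁ <:+ l₂) (hne : l₁ ≠ []) :
    l₂.getLast? = l₁.getLast? := by
  obtain ⟨s, rfl⟩ := h
  rcases List.eq_nil_or_concat l₁ with rfl | ⟨t, y, rfl⟩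
  · exact absurd rfl hne
  · rw [List.getLast?_append]
    simp

lemma pal_suffix_concat_structure {q w : List A} {x : A} (hq : q.reverse = q)
    (hsuf : q <:+ w ++ [x]) (hne : q ≠ []) :
    q = [x] ∨ ∃ m : List A, m.reverse = m ∧ q = x :: (m ++ [x]) ∧ ∃ s, w = s ++ x :: m := by
  have hlast : q.getLast? = some x := by
    have h1 := getLast?_of_suffix hsuf hne
    rw [List.getLast?_append] at h1
    simp at h1
    exact h1.symm
  have hhead : q.head? = some x := by rw [← pal_getLast?_eq_head? hq]; exact hlast
  cases q with
  | nil => exact absurd rfl hne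
  | cons y q'' =>
      have hy : y = x := by simpa using hhead
      subst hy
      rcases List.eq_nil_or_concat q'' with rfl | ⟨m, z, hmz⟩
      · exact Or.inl rfl
      · rw [List.concat_eq_append] at hmz
        subst hmz
        right
        have hq' : y :: (m ++ [z]) = (y :: m) ++ [z] := by simp
        have hz : z = y := by
          rw [hq', List.getLast?_concat] at hlast
          injection hlast with h2
        subst hz
        have hmpal : m.reverse = m := by
          have h2 := hq
          rw [List.reverse_cons, List.reverse_append, List.reverse_singleton] at h2
          have h3 : z :: (m.reverse ++ [z]) = z :: (m ++ [z]) := by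
            rw [← h2]; simp
          injection h3 with _ h4
          exact List.append_cancel_right h4
        refine ⟨m, hmpal, rfl, ?_⟩
        obtain ⟨s, hs⟩ := hsuf
        refine ⟨s, ?_⟩
        have h5 : (s ++ (z :: m)) ++ [z] = w ++ [z] := by
          rw [← hs]; simp
        exact (List.append_cancel_right h5).symm

lemma prefix_concat_psi (x : A) : [a] <+: psiL' a x ++ [a] := by
  rcases psiL'_eq (a := a) x with ⟨h, _⟩ | ⟨h, _⟩ <;> rw [h] <;>
    exact List.cons_prefix_cons.mpr ⟨rfl, List.nil_prefix⟩

lemma rich_PsiW_of_rich : ∀ (w : List A), RichWord w → RichWord (PsiW a w ++ [a]) := by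
  intro w
  induction w using List.reverseRecOn with
  | nil =>
      intro _
      rw [PsiW_nil, List.nil_append]
      have h1 : RichWord (([] : List A) ++ [a]) := rich_concat_of_new rich_nil
        ⟨[a], by simp, by simp, by intro h; simpa using h.length_le⟩
      simpa using h1
  | append_singleton w x ih =>
      intro h
      have hw : RichWord w := rich_of_prefix ⟨[x], rfl⟩ h
      have hV : RichWord (PsiW a w ++ [a]) := ih hw
      obtain ⟨q, hq1, hq2, hq3⟩ := exists_newPal_concat h
      have hne : q ≠ [] := fun hq => hq3 (hq ▸ List.nil_infix)
      by_cases hxa : x = a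
      · have e : PsiW a (w ++ [x]) ++ [a] = (PsiW a w ++ [a]) ++ [a] := by
          rw [PsiW_append, PsiW_cons, PsiW_nil, hxa]
          simp [psiL']
        rw [e]
        refine rich_concat_of_new hV ⟨PsiW a q ++ [a], PsiW_pal hq1, ?_, ?_⟩
        · rw [← e]
          exact PsiW_suffix hq2
        · intro hbad
          exact hq3 (SL w q hbad)
      · -- x ≠ a
        have eWx : PsiW a (w ++ [x]) = (PsiW a w ++ [a]) ++ [x] := by
          rw [PsiW_append, PsiW_cons, PsiW_nil]
          rcases psiL'_eq (a := a) x with ⟨-, hc⟩ | ⟨hc, -⟩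
          · exact absurd hc hxa
          · rw [hc]; simp
        have step1 : RichWord ((PsiW a w ++ [a]) ++ [x]) := by
          rcases pal_suffix_concat_structure hq1 hq2 hne with rfl | ⟨m, hm, rfl, s, hws⟩
          · -- q = [x]
            refine rich_concat_of_new hV ⟨[x], by simp, ⟨PsiW a w ++ [a], rfl⟩, ?_⟩
            intro hbad
            exact hq3 (SL_letter hxa hbad)
          · -- q = x :: (m ++ [x]), w = s ++ x :: m
            refine rich_concat_of_new hV ⟨[x] ++ (PsiW a m ++ [a, x]), ?_, ?_, ?_⟩
            · -- palindrome
              have hz := PsiW_pal (a := a) hm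
              have e1 : ([x] ++ (PsiW a m ++ [a, x])) =
                  [x] ++ (PsiW a m ++ [a]) ++ [x] := by simp
              rw [e1, List.reverse_append, List.reverse_append, hz]
              simp
            · -- suffix of (PsiW a w ++ [a]) ++ [x]
              have hqsuf : PsiW a (x :: (m ++ [x])) <:+ PsiW a (w ++ [x]) := by
                obtain ⟨s', hs'⟩ := hq2
                exact ⟨PsiW a s', by rw [← PsiW_append, hs']⟩
              have htail : [x] ++ (PsiW a m ++ [a, x]) <:+ PsiW a (x :: (m ++ [x])) := by
                rw [PsiW_cons, PsiW_append, PsiW_cons, PsiW_nil]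
                rcases psiL'_eq (a := a) x with ⟨-, hc⟩ | ⟨hc, -⟩
                · exact absurd hc hxa
                · rw [hc]
                  refine ⟨[a], by simp⟩
              rw [← eWx]
              exact htail.trans hqsuf
            · -- new
              intro hbad
              have := SL2 hxa w m hbad
              refine hq3 ?_
              have e2 : [x] ++ m ++ [x] = x :: (m ++ [x]) := by simp
              rwa [e2] at this
        have e3 : PsiW a (w ++ [x]) ++ [a] = ((PsiW a w ++ [a]) ++ [x]) ++ [a] := by
          rw [eWx]
        rw [e3]
        refine rich_concat_of_new step1 ⟨PsiW a q ++ [a], PsiW_pal hq1, ?_, ?_⟩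
        · rw [← e3]
          exact PsiW_suffix hq2
        · intro hbad
          have hnsuf : ¬ (PsiW a q ++ [a]) <:+ ((PsiW a w ++ [a]) ++ [x]) := by
            intro hs
            have h1 := getLast?_of_suffix hs (by simp)
            rw [List.getLast?_concat, List.getLast?_concat] at h1
            exact hxa (by injection h1)
          have h2 := infix_of_infix_concat hbad hnsuf
          exact hq3 (SL w q h2)

lemma rich_of_rich_PsiW : ∀ (w : List A), RichWord (PsiW a w ++ [a]) → RichWord w := by
  intro w
  induction w using List.reverseRecOn with
  | nil => intro _; exact rich_nil
  | append_singleton w x ih =>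
      intro h
      have hpre : PsiW a w ++ [a] <+: PsiW a (w ++ [x]) ++ [a] := by
        rw [PsiW_append, List.append_assoc]
        refine (List.prefix_append_right_inj (PsiW a w)).mpr ?_
        show [a] <+: PsiW a [x] ++ [a]
        rw [PsiW_cons, PsiW_nil, List.append_nil]
        exact prefix_concat_psi x
      have hw : RichWord w := ih (rich_of_prefix hpre h)
      obtain ⟨p, hp1, hp2, hp3⟩ := exists_newPal_concat h
      have hpne : p ≠ [] := fun hp => hp3 (hp ▸ List.nil_infix)
      obtain ⟨q, hq1, hq2, hq3⟩ := SL3 (w ++ [x]) p hp1 hpne hp2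
      refine rich_concat_of_new hw ⟨q, hq2, hq1, ?_⟩
      intro hbad
      obtain ⟨s, t, hst⟩ := hbad
      refine hp3 ?_
      obtain ⟨z, hz⟩ := PsiW_head' (a := a) (w := t ++ [x]) (by simp)
      refine ⟨PsiW a s, z, ?_⟩
      rw [hq3]
      have e1 : w ++ [x] = s ++ q ++ (t ++ [x]) := by rw [← hst]; simp
      rw [e1, PsiW_append, PsiW_append, hz]
      simp

lemma rich_PsiW_iff (w : List A) : RichWord (PsiW a w ++ [a]) ↔ RichWord w :=
  ⟨rich_of_rich_PsiW w, rich_PsiW_of_rich w⟩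

end Psi








section Inf

set_option linter.unusedSectionVars false

variable {A : Type*} [DecidableEq A]

def NonErasing (φ : A → List A) : Prop := ∀ c, φ c ≠ []

lemma length_factorAt (u : ℕ → A) (i len : ℕ) : (factorAt u i len).length = len := by
  simp [factorAt]

lemma getElem_factorAt (u : ℕ → A) (i len k : ℕ) (h : k < (factorAt u i len).length) :
    (factorAt u i len)[k] = u (i + k) := by
  simp [factorAt]

lemma factorAt_append (u : ℕ → A) (i m n : ℕ) :
    factorAt u i (m + n) = factorAt u i m ++ factorAt u (i + m) n := by
  apply List.ext_getElem
  · simp [length_factorAt]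
  · intro k h1 h2
    rw [getElem_factorAt]
    rcases lt_or_ge k m with hk | hk
    · rw [List.getElem_append_left (by rwa [length_factorAt])]
      rw [getElem_factorAt]
    · rw [List.getElem_append_right (by rwa [length_factorAt])]
      rw [getElem_factorAt, length_factorAt]
      congr 1
      omega

lemma take_factorAt (u : ℕ → A) (i len n : ℕ) (h : n ≤ len) :
    (factorAt u i len).take n = factorAt u i n := by
  rw [show len = n + (len - n) by omega, factorAt_append]
  rw [List.take_append, List.take_of_length_le (by rw [length_factorAt]),
    length_factorAt, Nat.sub_self, List.take_zero, List.append_nil]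

lemma drop_factorAt (u : ℕ → A) (i len n : ℕ) (h : n ≤ len) :
    (factorAt u i len).drop n = factorAt u (i + n) (len - n) := by
  rw [show len = n + (len - n) by omega, factorAt_append]
  rw [List.drop_append, List.drop_of_length_le (by rw [length_factorAt]),
    length_factorAt, Nat.sub_self, List.drop_zero, List.nil_append]
  congr 1
  omega

lemma factorAt_one (u : ℕ → A) (j : ℕ) : factorAt u j 1 = [u j] := by
  show List.map (fun k => u (j + k)) (List.range 1) = [u j]
  rw [List.range_succ, List.range_zero]
  simp

lemma occursAt_of_eq_append {u : ℕ → A} {w x y z : List A} {i : ℕ}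
    (h : OccursAt u w i) (hw : w = x ++ y ++ z) : OccursAt u y (i + x.length) := by
  unfold OccursAt at h ⊢
  have hlen : w.length = x.length + y.length + z.length := by rw [hw]; simp; omega
  have h1 : (factorAt u i w.length).drop x.length = y ++ z := by
    rw [h, hw, List.append_assoc, List.drop_append, List.drop_of_length_le le_rfl,
      Nat.sub_self, List.drop_zero, List.nil_append]
  rw [drop_factorAt u i _ _ (by omega)] at h1
  have h2 : (factorAt u (i + x.length) (w.length - x.length)).take y.length = y := by
    rw [h1, List.take_append, List.take_of_length_le le_rfl,
      Nat.sub_self, List.take_zero, List.append_nil]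
  rwa [take_factorAt u _ _ _ (by omega)] at h2

lemma inLang_of_infix {u : ℕ → A} {v w : List A} (hv : InLang u v) (h : w <:+: v) :
    InLang u w := by
  obtain ⟨i, hi⟩ := hv
  obtain ⟨s, t, hst⟩ := h
  exact ⟨i + s.length, occursAt_of_eq_append hi (by rw [← hst])⟩

lemma inLang_factorAt (u : ℕ → A) (i len : ℕ) : InLang u (factorAt u i len) := by
  refine ⟨i, ?_⟩
  unfold OccursAt
  rw [length_factorAt]

lemma richWord_of_richInf {t : ℕ → A} (h : RichInf t) {v : List A} (hv : InLang t v) :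
    RichWord v := by
  obtain ⟨i, hi⟩ := hv
  have h1 : factorAt t 0 (i + v.length) = factorAt t 0 i ++ v := by
    rw [factorAt_append, Nat.zero_add, hi]
  have h2 := h (i + v.length)
  rw [h1] at h2
  exact rich_of_infix ⟨factorAt t 0 i, [], by simp⟩ h2

/-- The prefix of length `m` blocks of the image word. -/
def Fword (φ : A → List A) (u : ℕ → A) (m : ℕ) : List A :=
  (List.range m).flatMap (fun i => φ (u i))

lemma Fword_succ (φ : A → List A) (u : ℕ → A) (m : ℕ) :
    Fword φ u (m + 1) = Fword φ u m ++ φ (u m) := by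
  unfold Fword
  rw [List.range_succ, List.flatMap_append]
  simp

lemma Fword_prefix (φ : A → List A) (u : ℕ → A) {m n : ℕ} (h : m ≤ n) :
    Fword φ u m <+: Fword φ u n := by
  unfold Fword
  rw [show n = m + (n - m) by omega, List.range_add, List.flatMap_append]
  exact ⟨_, rfl⟩

lemma length_Fword_ge {φ : A → List A} (hφ : NonErasing φ) (u : ℕ → A) (m : ℕ) :
    m ≤ (Fword φ u m).length := by
  induction m with
  | zero => simp
  | succ m ih =>
      rw [Fword_succ, List.length_append]
      have h1 : 1 ≤ (φ (u m)).length := List.length_pos_iff.mpr (hφ (u m))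
      omega

lemma applyInf_eq_getD (φ : A → List A) (u : ℕ → A) (n : ℕ) :
    applyInf φ u n = (Fword φ u (n + 1)).getD n (u 0) := rfl

lemma applyInf_getD {φ : A → List A} (hφ : NonErasing φ) (u : ℕ → A) {m k : ℕ}
    (h : k < (Fword φ u m).length) :
    (Fword φ u m).getD k (u 0) = applyInf φ u k := by
  rcases le_or_gt m (k + 1) with hm | hm
  · obtain ⟨t, ht⟩ := Fword_prefix φ u hm
    rw [applyInf_eq_getD, ← ht, List.getD_append _ _ _ _ h]
  · obtain ⟨t, ht⟩ := Fword_prefix φ u (show k + 1 ≤ m by omega)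
    have hk : k < (Fword φ u (k + 1)).length := by
      have := length_Fword_ge hφ u (k + 1); omega
    rw [applyInf_eq_getD, ← ht, List.getD_append _ _ _ _ hk]

lemma Fword_eq_factorAt {φ : A → List A} (hφ : NonErasing φ) (u : ℕ → A) (m : ℕ) :
    Fword φ u m = factorAt (applyInf φ u) 0 (Fword φ u m).length := by
  apply List.ext_getElem
  · rw [length_factorAt]
  · intro k h1 h2
    rw [getElem_factorAt, Nat.zero_add, ← applyInf_getD hφ u h1, List.getD_eq_getElem _ _ h1]

lemma factorAt_applyInf_take {φ : A → List A} (hφ : NonErasing φ) (u : ℕ → A) {n m : ℕ}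
    (h : n ≤ (Fword φ u m).length) :
    factorAt (applyInf φ u) 0 n = (Fword φ u m).take n := by
  rw [Fword_eq_factorAt hφ u m, take_factorAt _ _ _ _ h]

lemma inLang_of_infix_Fword {φ : A → List A} (hφ : NonErasing φ) {u : ℕ → A} {v : List A}
    {m : ℕ} (h : v <:+: Fword φ u m) : InLang (applyInf φ u) v := by
  rw [Fword_eq_factorAt hφ u m] at h
  exact inLang_of_infix (inLang_factorAt _ 0 _) h

lemma applyM_factorAt (φ : A → List A) (u : ℕ → A) (m : ℕ) :
    applyM φ (factorAt u 0 m) = Fword φ u m := by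
  unfold applyM factorAt Fword
  rw [List.flatMap_map]
  simp

lemma inLang_Fword {φ : A → List A} (hφ : NonErasing φ) {u : ℕ → A} {v : List A}
    (hv : InLang (applyInf φ u) v) : ∃ m, v <:+: Fword φ u m := by
  obtain ⟨i, hi⟩ := hv
  refine ⟨i + v.length, ?_⟩
  have h1 : factorAt (applyInf φ u) 0 (i + v.length)
      = factorAt (applyInf φ u) 0 i ++ v := by
    rw [factorAt_append, Nat.zero_add, hi]
  have h2 : factorAt (applyInf φ u) 0 (i + v.length) = (Fword φ u (i + v.length)).take
      (i + v.length) := factorAt_applyInf_take hφ u (length_Fword_ge hφ u _)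
  have h3 : v <:+: factorAt (applyInf φ u) 0 (i + v.length) := by
    rw [h1]; exact ⟨factorAt (applyInf φ u) 0 i, [], by simp⟩
  rw [h2] at h3
  exact h3.trans (List.take_prefix _ _).isInfix

/-- Transfer of occurrences: if `q ∈ L(u)` and `r` is a prefix of every `φ c`,
then `φ(q) ++ r ∈ L(φ(u))`. -/
lemma inLang_applyM_append {φ : A → List A} (hφ : NonErasing φ) {u : ℕ → A} {q : List A}
    (hq : InLang u q) {r : List A} (hr : ∀ c, r <+: φ c) :
    InLang (applyInf φ u) (applyM φ q ++ r) := by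
  obtain ⟨i, hi⟩ := hq
  set m := i + q.length + 1 with hm
  have h1 : factorAt u 0 m = factorAt u 0 i ++ q ++ [u (i + q.length)] := by
    rw [show m = i + q.length + 1 by rfl, factorAt_append, factorAt_append, Nat.zero_add, hi]
    congr 1
    simp [factorAt]
  have h2 : Fword φ u m = applyM φ (factorAt u 0 i) ++ applyM φ q ++ φ (u (i + q.length)) := by
    rw [← applyM_factorAt, h1]
    unfold applyM
    rw [List.flatMap_append, List.flatMap_append]
    simp
  apply inLang_of_infix_Fword hφ (m := m)
  rw [h2]
  obtain ⟨t, ht⟩ := hr (u (i + q.length))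
  refine ⟨applyM φ (factorAt u 0 i), t, ?_⟩
  rw [← ht]
  simp [List.append_assoc]

/-- Transfer of occurrences at positions `≥ 1`: if `q` occurs at `i ≥ 1` and `r` is a
suffix of every `φ c`, then `r ++ φ(q) ∈ L(φ(u))`. -/
lemma inLang_append_applyM {φ : A → List A} (hφ : NonErasing φ) {u : ℕ → A} {q : List A}
    {i : ℕ} (hq : OccursAt u q i) (hi : 1 ≤ i) {r : List A} (hr : ∀ c, r <:+ φ c) :
    InLang (applyInf φ u) (r ++ applyM φ q) := by
  have h1 : factorAt u 0 (i + q.length)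
      = factorAt u 0 (i - 1) ++ [u (i - 1)] ++ q := by
    rw [show i + q.length = (i - 1) + 1 + q.length by omega]
    rw [factorAt_append u 0 (i - 1 + 1) q.length, factorAt_append u 0 (i - 1) 1]
    rw [Nat.zero_add, Nat.zero_add, show i - 1 + 1 = i by omega]
    rw [factorAt_one, hq]
  have h2 : Fword φ u (i + q.length)
      = applyM φ (factorAt u 0 (i - 1)) ++ φ (u (i - 1)) ++ applyM φ q := by
    rw [← applyM_factorAt, h1]
    unfold applyM
    rw [List.flatMap_append, List.flatMap_append]
    simp
  apply inLang_of_infix_Fword hφ (m := i + q.length)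
  rw [h2]
  obtain ⟨t, ht⟩ := hr (u (i - 1))
  refine ⟨applyM φ (factorAt u 0 (i - 1)) ++ t, [], ?_⟩
  rw [← ht]
  simp [List.append_assoc]

/-- In a reversal-closed infinite word, the reversal of every factor occurs at a
positive position. -/
lemma rev_occurs_pos {u : ℕ → A} (hcl : ClosedUnderReversal u) {v : List A}
    (hv : InLang u v) : ∃ i, 1 ≤ i ∧ OccursAt u v.reverse i := by
  obtain ⟨j, hj⟩ := hv
  have ht : InLang u (factorAt u 0 (j + v.length + 1)) := inLang_factorAt u 0 _
  obtain ⟨i₀, hi₀⟩ := hcl _ ht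
  have h1 : factorAt u 0 (j + v.length + 1)
      = factorAt u 0 j ++ v ++ [u (j + v.length)] := by
    rw [factorAt_append, factorAt_append, Nat.zero_add, hj]
    congr 1
    simp [factorAt]
  have h2 : (factorAt u 0 (j + v.length + 1)).reverse
      = [u (j + v.length)] ++ v.reverse ++ (factorAt u 0 j).reverse := by
    rw [h1]
    simp [List.reverse_append]
  have h3 := occursAt_of_eq_append hi₀ h2
  exact ⟨i₀ + 1, by omega, by simpa using h3⟩

end Inf

section PsiInf

set_option linter.unusedSectionVars false

variable {A : Type*} [DecidableEq A] {a : A}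

/-- ψ̄_a on letters. -/
def psiR' (a : A) : A → List A := fun b => if b = a then [a] else [b, a]

lemma psiR'_eq (c : A) : psiR' a c = [a] ∧ c = a ∨ psiR' a c = [c, a] ∧ c ≠ a := by
  unfold psiR'
  by_cases h : c = a
  · subst h; simp
  · simp [h]

lemma psiL'_nonerasing : NonErasing (psiL' a) := by
  intro c
  rcases psiL'_eq (a := a) c with ⟨h, _⟩ | ⟨h, _⟩ <;> simp [h]

lemma psiR'_nonerasing : NonErasing (psiR' a) := by
  intro c
  rcases psiR'_eq (a := a) c with ⟨h, _⟩ | ⟨h, _⟩ <;> simp [h]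

lemma psiL'_head_prefix (c : A) : [a] <+: psiL' a c := by
  unfold psiL'
  by_cases h : c = a
  · rw [if_pos h]
  · rw [if_neg h]
    exact ⟨[c], rfl⟩

lemma psiR'_last_suffix (c : A) : [a] <:+ psiR' a c := by
  unfold psiR'
  by_cases h : c = a
  · rw [if_pos h]
  · rw [if_neg h]
    exact ⟨[c], rfl⟩

lemma applyM_psiL' (w : List A) : applyM (psiL' a) w = PsiW a w := rfl

lemma psiR'_letter (c : A) : [a] ++ psiR' a c = psiL' a c ++ [a] := by
  rcases psiL'_eq (a := a) c with ⟨h, hc⟩ | ⟨h, hc⟩ <;>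
    rcases psiR'_eq (a := a) c with ⟨h', hc'⟩ | ⟨h', hc'⟩ <;> rw [h, h'] <;> first
      | rfl
      | exact absurd hc' hc
      | exact absurd hc hc'

lemma applyM_psiR' (w : List A) : [a] ++ applyM (psiR' a) w = PsiW a w ++ [a] := by
  induction w with
  | nil => rfl
  | cons c w ih =>
      show [a] ++ (psiR' a c ++ applyM (psiR' a) w) = (psiL' a c ++ PsiW a w) ++ [a]
      rw [← List.append_assoc, psiR'_letter c, List.append_assoc, ih, ← List.append_assoc]

/-- ψ-image: richness transfers. -/
lemma rich_inf_psiL_iff (u : ℕ → A) : RichInf u ↔ RichInf (applyInf (psiL' a) u) := by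
  constructor
  · intro h n
    have hF : Fword (psiL' a) u n = PsiW a (factorAt u 0 n) := by
      rw [← applyM_factorAt, applyM_psiL']
    have hrich : RichWord (PsiW a (factorAt u 0 n) ++ [a]) :=
      (rich_PsiW_iff _).mpr (h n)
    have hpre : factorAt (applyInf (psiL' a) u) 0 n = (Fword (psiL' a) u n).take n :=
      factorAt_applyInf_take psiL'_nonerasing u (length_Fword_ge psiL'_nonerasing u n)
    rw [hpre, hF]
    exact rich_of_prefix ((List.take_prefix _ _).trans ⟨[a], rfl⟩) hrich
  · intro h n
    have h1 : InLang (applyInf (psiL' a) u) (applyM (psiL' a) (factorAt u 0 n) ++ [a]) :=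
      inLang_applyM_append psiL'_nonerasing (inLang_factorAt u 0 n) psiL'_head_prefix
    have h2 := richWord_of_richInf h h1
    rw [applyM_psiL'] at h2
    exact (rich_PsiW_iff _).mp h2

/-- ψ-image: closure under reversal transfers. -/
lemma closed_psiL (u : ℕ → A) (hcl : ClosedUnderReversal u) :
    ClosedUnderReversal (applyInf (psiL' a) u) := by
  intro v hv
  obtain ⟨m, hm⟩ := inLang_Fword psiL'_nonerasing hv
  have hF : Fword (psiL' a) u m = PsiW a (factorAt u 0 m) := by
    rw [← applyM_factorAt, applyM_psiL']
  have h1 : v <:+: PsiW a (factorAt u 0 m) ++ [a] := by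
    rw [← hF]
    exact hm.trans ⟨[], [a], by simp⟩
  have h2 : v.reverse <:+: PsiW a (factorAt u 0 m).reverse ++ [a] := by
    have := h1.reverse
    rwa [PsiW_reverse] at this
  have h3 : InLang (applyInf (psiL' a) u) (PsiW a (factorAt u 0 m).reverse ++ [a]) := by
    have h4 : InLang u (factorAt u 0 m).reverse := hcl _ (inLang_factorAt u 0 m)
    have h5 := inLang_applyM_append (φ := psiL' a) psiL'_nonerasing h4
      (r := [a]) (psiL'_head_prefix (a := a))
    rwa [applyM_psiL'] at h5
  exact inLang_of_infix h3 h2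

lemma applyInf_psiL_zero (u : ℕ → A) : applyInf (psiL' a) u 0 = a := by
  show (((List.range 1).flatMap fun i => psiL' a (u i))).getD 0 (u 0) = a
  rw [List.range_succ, List.range_zero]
  rcases psiL'_eq (a := a) (u 0) with ⟨h, _⟩ | ⟨h, _⟩ <;> simp [h]

lemma applyInf_psiL_succ (u : ℕ → A) (n : ℕ) :
    applyInf (psiL' a) u (n + 1) = applyInf (psiR' a) u n := by
  set m := n + 2 with hm
  have key : [a] ++ Fword (psiR' a) u m = Fword (psiL' a) u m ++ [a] := by
    rw [← applyM_factorAt, ← applyM_factorAt, applyM_psiL', applyM_psiR']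
  have hlen : (Fword (psiR' a) u m).length = (Fword (psiL' a) u m).length := by
    have := congrArg List.length key
    simp at this
    omega
  have hL : m ≤ (Fword (psiL' a) u m).length := length_Fword_ge psiL'_nonerasing u m
  have h1 : n + 1 < (Fword (psiL' a) u m).length := by omega
  have h2 : n < (Fword (psiR' a) u m).length := by omega
  rw [← applyInf_getD psiL'_nonerasing u h1, ← applyInf_getD psiR'_nonerasing u h2]
  have h3 : (Fword (psiL' a) u m).getD (n + 1) (u 0)
      = (Fword (psiL' a) u m ++ [a]).getD (n + 1) (u 0) :=
    (List.getD_append _ _ _ _ h1).symm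
  rw [h3, ← key]
  show (a :: Fword (psiR' a) u m).getD (n + 1) (u 0) = _
  rw [List.getD_cons_succ]

lemma factorAt_psiR_cons (u : ℕ → A) (n : ℕ) :
    a :: factorAt (applyInf (psiR' a) u) 0 n = factorAt (applyInf (psiL' a) u) 0 (n + 1) := by
  apply List.ext_getElem
  · simp [length_factorAt]
  · intro k h1 h2
    rw [getElem_factorAt]
    cases k with
    | zero =>
        show a = applyInf (psiL' a) u (0 + 0)
        rw [Nat.zero_add, applyInf_psiL_zero]
    | succ k =>
        rw [List.getElem_cons_succ, getElem_factorAt, Nat.zero_add, Nat.zero_add,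
          applyInf_psiL_succ]

/-- ψ̄-image: richness transfers (uses closure under reversal for the backward direction). -/
lemma rich_inf_psiR_iff (u : ℕ → A) (hcl : ClosedUnderReversal u) :
    RichInf u ↔ RichInf (applyInf (psiR' a) u) := by
  constructor
  · intro h n
    have hs : RichInf (applyInf (psiL' a) u) := (rich_inf_psiL_iff u).mp h
    have h1 := hs (n + 1)
    rw [← factorAt_psiR_cons] at h1
    exact rich_of_infix ⟨[a], [], by simp⟩ h1
  · intro h n
    obtain ⟨i, hi1, hocc⟩ := rev_occurs_pos hcl (inLang_factorAt u 0 n)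
    have h1 : InLang (applyInf (psiR' a) u)
        ([a] ++ applyM (psiR' a) (factorAt u 0 n).reverse) :=
      inLang_append_applyM psiR'_nonerasing hocc hi1 psiR'_last_suffix
    have h2 := richWord_of_richInf h h1
    rw [applyM_psiR'] at h2
    have h3 := (rich_PsiW_iff _).mp h2
    exact rich_reverse_iff.mp h3

/-- ψ̄-image: closure under reversal transfers. -/
lemma closed_psiR (u : ℕ → A) (hcl : ClosedUnderReversal u) :
    ClosedUnderReversal (applyInf (psiR' a) u) := by
  intro v hv
  obtain ⟨m, hm⟩ := inLang_Fword psiR'_nonerasing hv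
  have h1 : v <:+: PsiW a (factorAt u 0 m) ++ [a] := by
    rw [← applyM_psiR']
    have hm' := hm
    rw [← applyM_factorAt (psiR' a) u m] at hm'
    exact hm'.trans ⟨[a], [], by simp⟩
  have h2 : v.reverse <:+: [a] ++ applyM (psiR' a) (factorAt u 0 m).reverse := by
    have := h1.reverse
    rw [PsiW_reverse] at this
    rwa [applyM_psiR']
  obtain ⟨i, hi1, hocc⟩ := rev_occurs_pos hcl (inLang_factorAt u 0 m)
  have h3 : InLang (applyInf (psiR' a) u)
      ([a] ++ applyM (psiR' a) (factorAt u 0 m).reverse) :=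
    inLang_append_applyM psiR'_nonerasing hocc hi1 psiR'_last_suffix
  exact inLang_of_infix h3 h2

end PsiInf

section PermComp

set_option linter.unusedSectionVars false

variable {A : Type*} [DecidableEq A]

lemma infix_map_iff {g : A → A} (hg : Function.Injective g) {q w : List A} :
    q <:+: List.map g w ↔ ∃ p, p <:+: w ∧ q = List.map g p := by
  constructor
  · rintro ⟨s, t, hst⟩
    refine ⟨(w.drop s.length).take q.length, ?_, ?_⟩
    · exact List.infix_iff_prefix_suffix.mpr ⟨w.drop s.length, List.take_prefix _ _,
        List.drop_suffix _ _⟩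
    · have h1 : q = ((List.map g w).drop s.length).take q.length := by
        rw [← hst, List.append_assoc, List.drop_left, List.take_left]
      conv_lhs => rw [h1]
      rw [← List.map_drop, ← List.map_take]
  · rintro ⟨p, hp, rfl⟩
    exact hp.map g

lemma richWord_map_iff {g : A → A} (hg : Function.Injective g) (w : List A) :
    RichWord (w.map g) ↔ RichWord w := by
  rw [richWord_iff_card, richWord_iff_card, List.length_map]
  suffices h : palF (w.map g) = (palF w).image (List.map g) by
    rw [h, Finset.card_image_of_injective _ (List.map_injective_iff.mpr hg)]
  ext q
  simp only [mem_palF, Finset.mem_image]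
  constructor
  · rintro ⟨hi, hpal⟩
    obtain ⟨p, hp, rfl⟩ := (infix_map_iff hg).mp hi
    refine ⟨p, ⟨hp, ?_⟩, rfl⟩
    have h2 : List.map g p.reverse = List.map g p := by rw [List.map_reverse, hpal]
    exact List.map_injective_iff.mpr hg h2
  · rintro ⟨p, hp, rfl⟩
    exact ⟨hp.1.map g, by rw [← List.map_reverse, hp.2]⟩

lemma flatMap_singleton_eq_map {α β : Type*} (f : α → β) (l : List α) :
    (l.flatMap fun x => [f x]) = l.map f := by
  induction l with
  | nil => rfl
  | cons c l ih => simp [ih]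

lemma applyInf_perm (π : A → A) (u : ℕ → A) :
    applyInf (fun c => [π c]) u = fun n => π (u n) := by
  funext n
  show ((List.range (n + 1)).flatMap fun i => [π (u i)]).getD n (u 0) = π (u n)
  rw [flatMap_singleton_eq_map (fun i => π (u i)) (List.range (n + 1))]
  rw [List.getD_eq_getElem _ _ (by simp)]
  simp

lemma factorAt_comp (g : A → A) (u : ℕ → A) (i len : ℕ) :
    factorAt (fun n => g (u n)) i len = (factorAt u i len).map g := by
  unfold factorAt
  rw [List.map_map]
  rfl

lemma richInf_perm_iff {π : A → A} (hg : Function.Injective π) (u : ℕ → A) :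
    RichInf u ↔ RichInf (fun n => π (u n)) := by
  constructor
  · intro h n
    rw [factorAt_comp, richWord_map_iff hg]
    exact h n
  · intro h n
    have := h n
    rwa [factorAt_comp, richWord_map_iff hg] at this

lemma closed_perm (π : A → A) (u : ℕ → A) (hcl : ClosedUnderReversal u) :
    ClosedUnderReversal (fun n => π (u n)) := by
  intro v hv
  obtain ⟨i, hi⟩ := hv
  unfold OccursAt at hi
  rw [factorAt_comp] at hi
  have h1 : InLang u ((factorAt u i v.length)) := inLang_factorAt u i v.length
  obtain ⟨i', hi'⟩ := hcl _ h1
  refine ⟨i', ?_⟩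
  unfold OccursAt at hi' ⊢
  rw [List.length_reverse, length_factorAt] at hi'
  rw [factorAt_comp, List.length_reverse, hi', List.map_reverse, hi]

lemma length_applyM_ge {φ : A → List A} (hφ : NonErasing φ) (v : List A) :
    v.length ≤ (applyM φ v).length := by
  induction v with
  | nil => simp [applyM]
  | cons c v ih =>
      show (c :: v).length ≤ (φ c ++ applyM φ v).length
      rw [List.length_append, List.length_cons]
      have := List.length_pos_iff.mpr (hφ c)
      omega

lemma nonErasing_comp {φ ψ : A → List A} (hφ : NonErasing φ) (hψ : NonErasing ψ) :
    NonErasing (fun c => applyM φ (ψ c)) := by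
  intro c h
  have h1 := length_applyM_ge hφ (ψ c)
  have h2 := List.length_pos_iff.mpr (hψ c)
  have h' : applyM φ (ψ c) = [] := h
  rw [h'] at h1
  simp at h1
  exact hψ c h1

lemma applyInf_comp {φ ψ : A → List A} (hφ : NonErasing φ) (hψ : NonErasing ψ) (u : ℕ → A) :
    applyInf (fun c => applyM φ (ψ c)) u = applyInf φ (applyInf ψ u) := by
  funext n
  set s₂ := applyInf ψ u with hs₂
  set K := (Fword ψ u (n + 1)).length with hK
  have hKn : n + 1 ≤ K := length_Fword_ge hψ u (n + 1)
  have hF : Fword (fun c => applyM φ (ψ c)) u (n + 1) = Fword φ s₂ K := by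
    show (List.range (n + 1)).flatMap (fun i => (ψ (u i)).flatMap φ) = _
    rw [← List.flatMap_assoc]
    show (Fword ψ u (n + 1)).flatMap φ = Fword φ s₂ K
    conv_lhs => rw [Fword_eq_factorAt hψ u (n + 1)]
    rw [← hK, ← hs₂]
    show applyM φ (factorAt s₂ 0 K) = Fword φ s₂ K
    exact applyM_factorAt φ s₂ K
  have h1 : n < (Fword φ s₂ K).length := by
    have := length_Fword_ge hφ s₂ K
    omega
  have h2 : n < (Fword (fun c => applyM φ (ψ c)) u (n + 1)).length := by
    rw [hF]; exact h1
  show (Fword (fun c => applyM φ (ψ c)) u (n + 1)).getD n (u 0) = applyInf φ s₂ n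
  rw [← applyInf_getD hφ s₂ h1]
  rw [List.getD_eq_getElem _ _ h2, List.getD_eq_getElem _ _ h1]
  exact List.getElem_of_eq hF h2

end PermComp


lemma isAR_master {A : Type*} [DecidableEq A] {φ : A → List A} (hφ : IsAR φ) :
    NonErasing φ ∧ ∀ u : ℕ → A, ClosedUnderReversal u →
      ((RichInf u ↔ RichInf (applyInf φ u)) ∧ ClosedUnderReversal (applyInf φ u)) := by
  induction hφ with
  | perm π =>
      refine ⟨fun c => by simp, fun u hcl => ?_⟩
      rw [applyInf_perm π u]
      exact ⟨richInf_perm_iff π.injective u, closed_perm π u hcl⟩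
  | psiL a =>
      exact ⟨psiL'_nonerasing, fun u hcl =>
        ⟨rich_inf_psiL_iff u, closed_psiL u hcl⟩⟩
  | psiR a =>
      exact ⟨psiR'_nonerasing, fun u hcl =>
        ⟨rich_inf_psiR_iff u hcl, closed_psiR u hcl⟩⟩
  | comp hφ' hψ' ihφ ihψ =>
      refine ⟨nonErasing_comp ihφ.1 ihψ.1, fun u hcl => ?_⟩
      rw [applyInf_comp ihφ.1 ihψ.1 u]
      obtain ⟨hiff1, hcl1⟩ := ihψ.2 u hcl
      obtain ⟨hiff2, hcl2⟩ := ihφ.2 _ hcl1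
      exact ⟨hiff1.trans hiff2, hcl2⟩


/-- For an Arnoux-Rauzy morphism `φ` and an infinite word `u` whose
language is closed under reversal, `u` is rich iff `φ(u)` is rich. -/
theorem arnoux_rauzy_preserves_richness {A : Type*} [Fintype A] [DecidableEq A]
    (φ : A → List A) (hφ : IsAR φ) (u : ℕ → A) (hcl : ClosedUnderReversal u) :
    RichInf u ↔ RichInf (applyInf φ u) :=
  ((isAR_master hφ).2 u hcl).1
end
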